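/- arXiv:0903.1908 — 3 statements merged into one kernel-verified Lean document; each statement's English description precedes it below -/
import Mathlib

section
/- Let n ≥ 1 and let f : [a,b] → ℝ be continuous, not identically zero, and suppose that the first n moments of f vanish: ∫_a^b x^k f(x) dx = 0 for k = 0, 1, …, n−1. Then f changes sign at least n times in (a,b); that is, there exist points x₀ < x₁ < ⋯ < x_n in (a,b) with f(x_{i−1})·f(x_i) < 0 for every i = 1, …, n. -/
open Set

private lemma sign_trans {u v c : ℝ} (h1 : 0 < u * v) (h2 : 0 < c * v) : 0 < c * u := by
  nlinarith [mul_pos h1 h2, sq_nonneg v, sq_nonneg (u*v), sq_nonneg (c*v)]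

private lemma hpow_aux (k : ℕ) : ((-1:ℝ))^k * (-1)^k = 1 := by
  rw [← mul_pow]; norm_num

private lemma sign_stable {a b : ℝ} {f : ℝ → ℝ} (hf : ContinuousOn f (Set.Icc a b))
    {s : ℝ} (hs : s ∈ Set.Icc a b) (h0 : f s ≠ 0) :
    ∃ δ > 0, ∀ z ∈ Set.Icc a b, |z - s| < δ → 0 < f z * f s := by
  have hc := hf s hs
  rw [Metric.continuousWithinAt_iff] at hc
  obtain ⟨δ, hδ, hd⟩ := hc |f s| (abs_pos.mpr h0)
  refine ⟨δ, hδ, fun z hz hdist => ?_⟩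
  have h2 := hd hz (by simpa [Real.dist_eq] using hdist)
  rw [Real.dist_eq] at h2
  rcases lt_or_gt_of_ne h0 with h | h
  · nlinarith [abs_lt.mp h2, abs_of_neg h]
  · nlinarith [abs_lt.mp h2, abs_of_pos h]

private lemma nudge {a b : ℝ} {f : ℝ → ℝ} (hab : a < b) (hf : ContinuousOn f (Set.Icc a b))
    {y d c : ℝ} (hy : y ∈ Set.Icc a b) (h0 : f y ≠ 0) (hd : d < y) (hc : y < c) :
    ∃ y', y' ∈ Set.Ioo a b ∧ d < y' ∧ y' < c ∧ 0 < f y' * f y := by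
  obtain ⟨δ, hδ, hs⟩ := sign_stable hf hy h0
  rcases eq_or_lt_of_le hy.1 with h1 | h1
  · -- y = a
    have hu : a < min (min b c) (a + δ) := by
      simp only [lt_min_iff]
      exact ⟨⟨hab, h1 ▸ hc⟩, by linarith⟩
    obtain ⟨y', hy1, hy2⟩ := exists_between hu
    simp only [lt_min_iff] at hy2
    have hmem : y' ∈ Set.Icc a b := ⟨le_of_lt hy1, le_of_lt hy2.1.1⟩
    refine ⟨y', ⟨hy1, hy2.1.1⟩, by linarith, hy2.1.2, ?_⟩
    have : |y' - y| < δ := by rw [← h1]; rw [abs_of_nonneg (by linarith)]; linarith [hy2.2]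
    exact hs y' hmem this
  rcases eq_or_lt_of_le hy.2 with h2 | h2
  · -- y = b
    have hu : max (max a d) (b - δ) < b := by
      simp only [max_lt_iff]
      exact ⟨⟨hab, h2 ▸ hd⟩, by linarith⟩
    obtain ⟨y', hy1, hy2⟩ := exists_between hu
    simp only [max_lt_iff] at hy1
    have hmem : y' ∈ Set.Icc a b := ⟨le_of_lt hy1.1.1, le_of_lt hy2⟩
    refine ⟨y', ⟨hy1.1.1, hy2⟩, hy1.1.2, by linarith [show (b:ℝ) < c from h2 ▸ hc], ?_⟩
    have : |y' - y| < δ := by rw [h2]; rw [abs_of_nonpos (by linarith)]; linarith [hy1.2]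
    exact hs y' hmem this
  · exact ⟨y, ⟨h1, h2⟩, hd, hc, hs y hy (by simpa using hδ)⟩

private lemma sgn_pos {c u v : ℝ} (hc : c * c = 1) (h1 : 0 < c * u) (h2 : 0 < c * v) : 0 < u * v := by
  nlinarith [mul_pos h1 h2]

private lemma sgn_neg {c u v : ℝ} (hc : c * c = 1) (h1 : 0 < c * u) (h2 : 0 < -c * v) : u * v < 0 := by
  nlinarith [mul_pos h1 h2]

private lemma sgn_flip {c u v : ℝ} (hc : c * c = 1) (h1 : 0 < c * u) (h2 : u * v < 0) : 0 < -c * v := by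
  nlinarith [mul_pos h1 h1, mul_neg_of_pos_of_neg h1 h2]

private lemma sgn_contra {c u : ℝ} (h1 : 0 < c * u) (h2 : 0 < -c * u) : False := by
  nlinarith [mul_pos h1 h2]

/-- If `f` is continuous on `[a,b]`, not identically zero, and its first `n` moments
vanish, then `f` changes sign at least `n` times in `(a,b)`. -/
theorem moments_vanish_sign_changes
    (n : ℕ) (hn : 1 ≤ n) (a b : ℝ) (hab : a < b) (f : ℝ → ℝ)
    (hf : ContinuousOn f (Set.Icc a b))
    (hne : ∃ x ∈ Set.Icc a b, f x ≠ 0)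
    (hmom : ∀ k < n, ∫ x in a..b, x ^ k * f x = 0) :
    ∃ x : Fin (n + 1) → ℝ, StrictMono x ∧ (∀ i, x i ∈ Set.Ioo a b) ∧
      ∀ i : Fin n, f (x i.castSucc) * f (x i.succ) < 0 := by
  classical
  by_contra hcon
  set Q : ℕ → Prop := fun m => ∃ x : ℕ → ℝ, (∀ k ≤ m, x k ∈ Set.Ioo a b) ∧
      (∀ k < m, x k < x (k+1)) ∧ (∀ k < m, f (x k) * f (x (k+1)) < 0) ∧ f (x 0) ≠ 0
      with hQdef
  have hQn : ¬ Q n := by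
    rintro ⟨x, hmem, hlt, hsgn, -⟩
    apply hcon
    refine ⟨fun i => x i, ?_, fun i => hmem i (by omega), fun i => ?_⟩
    · rw [Fin.strictMono_iff_lt_succ]
      intro i
      simpa using hlt i i.isLt
    · simpa using hsgn i i.isLt
  have hQ0 : Q 0 := by
    obtain ⟨p, hp, hp0⟩ := hne
    obtain ⟨y', hy'1, -, -, hy'4⟩ := nudge hab hf hp hp0
      (show a - 1 < p by linarith [hp.1]) (show p < b + 1 by linarith [hp.2])
    exact ⟨fun _ => y', fun k _ => hy'1, fun k h => absurd h (by omega),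
      fun k h => absurd h (by omega), fun h => by simp [h] at hy'4⟩
  set M : ℕ := Nat.findGreatest Q n with hMdef
  have hQM : Q M := Nat.findGreatest_spec (Nat.zero_le n) hQ0
  have hMle : M ≤ n := Nat.findGreatest_le n
  have hMlt : M < n := by
    rcases lt_or_eq_of_le hMle with h | h
    · exact h
    · exact absurd (h ▸ hQM) hQn
  have hnot : ¬ Q (M + 1) := Nat.findGreatest_is_greatest (Nat.lt_succ_self M) (by omega)
  obtain ⟨x, hxIoo, hxlt, hxsgn, hx0⟩ := hQM
  -- monotonicity of x
  have hxmono : ∀ k l : ℕ, k < l → l ≤ M → x k < x l := by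
    intro k l hkl hlM
    induction l with
    | zero => omega
    | succ l ih =>
      rcases Nat.lt_or_ge k l with h | h
      · exact lt_trans (ih h (by omega)) (hxlt l (by omega))
      · have : k = l := by omega
        subst this; exact hxlt k (by omega)
  set ε : ℝ := if 0 < f (x 0) then 1 else -1 with hεdef
  set c : ℕ → ℝ := fun k => ε * (-1)^k with hcdef
  have hc1 : ∀ k, c k * c k = 1 := by
    intro k
    have : ε * ε = 1 := by rw [hεdef]; split_ifs <;> norm_num
    calc c k * c k = (ε * ε) * ((-1)^k * (-1)^k) := by rw [hcdef]; ring
    _ = 1 := by rw [this, hpow_aux k]; norm_num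
  have hcs : ∀ k, c (k+1) = - c k := by
    intro k; simp only [hcdef]; ring
  have hsign : ∀ k ≤ M, 0 < c k * f (x k) := by
    intro k
    induction k with
    | zero =>
      intro _
      have hc0 : c 0 = ε := by rw [hcdef]; simp
      rw [hc0, hεdef]; split_ifs with h
      · simpa using h
      · have : f (x 0) < 0 := lt_of_le_of_ne (not_lt.mp h) hx0
        nlinarith
    | succ k ih =>
      intro hk
      rw [hcs k]
      exact sgn_flip (hc1 k) (ih (by omega)) (hxsgn k (by omega))
  have hfxne : ∀ k ≤ M, f (x k) ≠ 0 := by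
    intro k hk h
    have := hsign k hk
    rw [h] at this; simp at this
  -- the sets B and points t
  set B : ℕ → Set ℝ := fun k => {z | z ∈ Set.Icc a (x (k+1)) ∧ 0 < c k * f z}
    with hBdef
  set t : ℕ → ℝ := fun k => sSup (B k) with htdef
  have hBmem : ∀ k < M, x k ∈ B k := by
    intro k hk
    exact ⟨⟨le_of_lt (hxIoo k (by omega)).1, le_of_lt (hxlt k hk)⟩, hsign k (by omega)⟩
  have hBne : ∀ k < M, (B k).Nonempty := fun k hk => ⟨x k, hBmem k hk⟩
  have hBbdd : ∀ k, BddAbove (B k) := fun k => ⟨x (k+1), fun z hz => hz.1.2⟩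
  have htge : ∀ k < M, x k ≤ t k := fun k hk => le_csSup (hBbdd k) (hBmem k hk)
  have htlt : ∀ k < M, t k < x (k+1) := by
    intro k hk
    have hk1 : x (k+1) ∈ Set.Icc a b :=
      ⟨le_of_lt (hxIoo (k+1) (by omega)).1, le_of_lt (hxIoo (k+1) (by omega)).2⟩
    obtain ⟨δ, hδ, hs⟩ := sign_stable hf hk1 (hfxne (k+1) (by omega))
    have hub : ∀ z ∈ B k, z ≤ x (k+1) - δ/2 := by
      intro z hz
      by_contra hzc
      push_neg at hzc
      have hzb : z ∈ Set.Icc a b :=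
        ⟨hz.1.1, le_trans hz.1.2 (le_of_lt (hxIoo (k+1) (by omega)).2)⟩
      have hdist : |z - x (k+1)| < δ := by
        rw [abs_of_nonpos (by linarith [hz.1.2])]
        linarith [hz.1.2]
      have h1 := hs z hzb hdist
      have h3 := hsign (k+1) (by omega)
      rw [hcs k] at h3
      -- f z and f (x (k+1)) have product > 0, but opposite c-signs
      exact absurd h1 (not_lt.mpr (le_of_lt (sgn_neg (hc1 k) hz.2 h3)))
    calc t k ≤ x (k+1) - δ/2 := csSup_le (hBne k hk) hub
    _ < x (k+1) := by linarith
  have htIoo : ∀ k < M, t k ∈ Set.Ioo a b := by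
    intro k hk
    exact ⟨lt_of_lt_of_le (hxIoo k (by omega)).1 (htge k hk),
      lt_trans (htlt k hk) (hxIoo (k+1) (by omega)).2⟩
  have hft : ∀ k < M, f (t k) = 0 := by
    intro k hk
    by_contra hftne
    have htmem : t k ∈ Set.Icc a b :=
      ⟨le_of_lt (htIoo k hk).1, le_of_lt (htIoo k hk).2⟩
    obtain ⟨δ, hδ, hs⟩ := sign_stable hf htmem hftne
    rcases lt_trichotomy (c k * f (t k)) 0 with hneg | hzero | hpos
    · -- sign of f near t k is opposite to B k signs; but sup has B k points nearby
      obtain ⟨z, hz, hzgt⟩ := exists_lt_of_lt_csSup (hBne k hk)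
        (show t k - δ/2 < t k by linarith)
      have hzle : z ≤ t k := le_csSup (hBbdd k) hz
      have hzb : z ∈ Set.Icc a b := ⟨hz.1.1, le_trans hzle htmem.2⟩
      have hdist : |z - t k| < δ := by
        rw [abs_of_nonpos (by linarith)]; linarith
      have h1 := hs z hzb hdist
      have h1' : 0 < f (t k) * f z := by
        linarith [h1, mul_comm (f z) (f (t k))]
      exact absurd (sign_trans h1' hz.2) (not_lt.mpr (le_of_lt hneg))
    · rcases mul_eq_zero.mp hzero with h | h
      · have := hc1 k; rw [h] at this; simp at this
      · exact hftne h
    · -- then points just above t k are in B k, contradicting sup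
      have hlt2 : t k < min (x (k+1)) (t k + δ) := by
        simp only [lt_min_iff]
        exact ⟨htlt k hk, by linarith⟩
      obtain ⟨z, hz1, hz2⟩ := exists_between hlt2
      simp only [lt_min_iff] at hz2
      have hzb : z ∈ Set.Icc a b :=
        ⟨le_trans htmem.1 (le_of_lt hz1), le_trans (le_of_lt hz2.1)
          (le_of_lt (hxIoo (k+1) (by omega)).2)⟩
      have hdist : |z - t k| < δ := by
        rw [abs_of_nonneg (by linarith)]; linarith
      have h1 := hs z hzb hdist
      have hzB : z ∈ B k := ⟨⟨hzb.1, le_of_lt hz2.1⟩, sign_trans h1 hpos⟩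
      exact absurd (le_csSup (hBbdd k) hzB) (not_le.mpr hz1)
  have htmono : ∀ k l : ℕ, k < l → l < M → t k < t l := by
    intro k l hkl hlM
    calc t k < x (k+1) := htlt k (by omega)
    _ ≤ x l := by
        rcases Nat.lt_or_ge (k+1) l with h | h
        · exact le_of_lt (hxmono _ _ h (by omega))
        · have : k + 1 = l := by omega
          rw [this]
    _ ≤ t l := htge l hlM
  -- the core contradiction lemma
  have hcore : ∀ j ≤ M, ∀ y ∈ Set.Icc a b, (∀ k < M, k < j → t k < y) →
      (∀ k < M, j ≤ k → y < t k) → 0 < c (j+1) * f y → False := by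
    intro j hjM y hy hT1 hT2 hsy
    have hfyne : f y ≠ 0 := by
      intro h; rw [h] at hsy; simp at hsy
    rcases lt_trichotomy y (x j) with hlt | heq | hgt
    · -- y < x j
      rcases Nat.eq_zero_or_pos j with rfl | hj
      · -- j = 0 : prepend a nudged copy of y
        obtain ⟨y', hy'Ioo, -, hy'lt, hy'sgn⟩ := nudge hab hf hy hfyne
          (show a - 1 < y by linarith [hy.1]) hlt
        have hy'c : 0 < c 1 * f y' := sign_trans hy'sgn hsy
        apply hnot
        refine ⟨fun k => match k with | 0 => y' | (l+1) => x l, ?_, ?_, ?_, ?_⟩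
        · intro k hk
          match k with
          | 0 => exact hy'Ioo
          | (l+1) => exact hxIoo l (by omega)
        · intro k hk
          match k with
          | 0 => exact hy'lt
          | (l+1) => exact hxlt l (by omega)
        · intro k hk
          match k with
          | 0 =>
            have h2 := sgn_neg (hc1 0) (hsign 0 (Nat.zero_le M))
              (show 0 < -c 0 * f y' by rw [← hcs 0]; exact hy'c)
            linarith [mul_comm (f (x 0)) (f y')]
          | (l+1) => exact hxsgn l (by omega)
        · intro h
          rw [h] at hy'c; simp at hy'c
      · -- j ≥ 1 : y would belong to B (j-1), contradicting t (j-1) < y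
        have hjm : j - 1 < M := by omega
        have h1 : t (j-1) < y := hT1 (j-1) hjm (by omega)
        have hcj : c (j+1) = c (j-1) := by
          rw [show j + 1 = (j-1) + 1 + 1 by omega, hcs, hcs, neg_neg]
        have hyB : y ∈ B (j-1) := by
          refine ⟨⟨hy.1, ?_⟩, by rw [← hcj]; exact hsy⟩
          rw [show j - 1 + 1 = j by omega]
          exact le_of_lt hlt
        exact absurd (le_csSup (hBbdd (j-1)) hyB) (not_le.mpr h1)
    · -- y = x j : sign contradiction
      rw [hcs j, heq] at hsy
      exact sgn_contra (hsign j hjM) hsy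
    · -- y > x j
      rcases Nat.lt_or_ge j M with hjM' | hjM''
      · -- j < M : insert y and a point z of B j above y
        have hyt : y < t j := hT2 j hjM' (le_refl j)
        obtain ⟨z, hzB, hyz⟩ := exists_lt_of_lt_csSup (hBne j hjM') hyt
        have hzsgn : 0 < c j * f z := hzB.2
        have hzne : z ≠ x (j+1) := by
          intro h
          rw [h] at hzsgn
          have h2 := hsign (j+1) (by omega)
          rw [hcs] at h2
          exact sgn_contra hzsgn h2
        have hzlt : z < x (j+1) := lt_of_le_of_ne hzB.1.2 hzne
        have hyIoo : y ∈ Set.Ioo a b :=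
          ⟨lt_trans (hxIoo j (by omega)).1 hgt,
           lt_trans (lt_trans hyz hzlt) (hxIoo (j+1) (by omega)).2⟩
        have hzIoo : z ∈ Set.Ioo a b :=
          ⟨lt_trans hyIoo.1 hyz, lt_trans hzlt (hxIoo (j+1) (by omega)).2⟩
        apply hnot
        refine ⟨fun k => if k ≤ j then x k else if k = j+1 then y
          else if k = j+2 then z else x (k-2), ?_, ?_, ?_, ?_⟩
        · intro k hk
          dsimp only
          split_ifs with h1 h2 h3
          · exact hxIoo k (by omega)
          · exact hyIoo
          · exact hzIoo
          · exact hxIoo (k-2) (by omega)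
        · intro k hk
          dsimp only
          split_ifs with h1 h2 h3 h4 h5 h6 h7 h8 h9 h10 <;> try omega
          · exact hxlt k (by omega)
          · have hkj : k = j := by omega
            subst hkj; exact hgt
          · have hkj : k = j + 2 := by omega
            subst hkj
            rw [show j + 2 + 1 - 2 = j + 1 by omega]
            exact hzlt
          · rw [show k + 1 - 2 = (k-2) + 1 by omega]
            exact hxlt (k-2) (by omega)
        · intro k hk
          dsimp only
          split_ifs with h1 h2 h3 h4 h5 h6 h7 h8 h9 h10 <;> try omega
          · exact hxsgn k (by omega)
          · have hkj : k = j := by omega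
            subst hkj
            exact sgn_neg (hc1 k) (hsign k hjM)
              (show 0 < -c k * f y by rw [← hcs k]; exact hsy)
          · exact sgn_neg (hc1 (j+1)) hsy
              (show 0 < -c (j+1) * f z by rw [hcs j, neg_neg]; exact hzsgn)
          · have hkj : k = j + 2 := by omega
            subst hkj
            rw [show j + 2 + 1 - 2 = j + 1 by omega]
            exact sgn_neg (hc1 j) hzsgn
              (show 0 < -c j * f (x (j+1)) by rw [← hcs j]; exact hsign (j+1) (by omega))
          · rw [show k + 1 - 2 = (k-2) + 1 by omega]
            exact hxsgn (k-2) (by omega)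
        · simp only [if_pos (Nat.zero_le j)]
          exact hx0
      · -- j = M : append a nudged copy of y
        have hjeq : j = M := by omega
        subst hjeq
        obtain ⟨y', hy'Ioo, hy'gt, -, hy'sgn⟩ := nudge hab hf hy hfyne hgt
          (show y < b + 1 by linarith [hy.2])
        have hy'c : 0 < c (M+1) * f y' := sign_trans hy'sgn hsy
        apply hnot
        refine ⟨fun k => if k ≤ M then x k else y', ?_, ?_, ?_, ?_⟩
        · intro k hk
          dsimp only
          split_ifs with h1
          · exact hxIoo k h1
          · exact hy'Ioo
        · intro k hk
          dsimp only
          split_ifs with h1 h2 <;> try omega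
          · exact hxlt k (by omega)
          · have hkj : k = M := by omega
            subst hkj; exact hy'gt
        · intro k hk
          dsimp only
          split_ifs with h1 h2 <;> try omega
          · exact hxsgn k (by omega)
          · have hkj : k = M := by omega
            subst hkj
            exact sgn_neg (hc1 M) (hsign M le_rfl)
              (show 0 < -c M * f y' by rw [← hcs M]; exact hy'c)
        · simp only [if_pos (Nat.zero_le M)]
          exact hx0
  -- the function g
  set g : ℝ → ℝ := fun y => c M * f y * ∏ k ∈ Finset.range M, (y - t k) with hgdef
  -- nonnegativity of g
  have hg : ∀ y ∈ Set.Icc a b, 0 ≤ g y := by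
    intro y hy
    rw [hgdef]
    dsimp only
    by_cases hfy : f y = 0
    · rw [hfy]; simp
    have hyt : ∀ k < M, y ≠ t k := by
      intro k hk h
      exact hfy (h ▸ hft k hk)
    set S := (Finset.range M).filter (fun k => t k < y) with hSdef
    set j := S.card with hjdef
    have hjle : j ≤ M := by
      calc j ≤ (Finset.range M).card := Finset.card_filter_le _ _
      _ = M := Finset.card_range M
    have hmemS : ∀ k < M, (t k < y ↔ k < j) := by
      intro k hk
      constructor
      · intro hty
        have hsub : Finset.range (k+1) ⊆ S := by
          intro k' hk'
          rw [Finset.mem_range] at hk'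
          rw [hSdef, Finset.mem_filter, Finset.mem_range]
          refine ⟨by omega, ?_⟩
          rcases Nat.lt_or_ge k' k with h | h
          · exact lt_trans (htmono k' k h hk) hty
          · have hkk : k' = k := by omega
            rwa [hkk]
        have := Finset.card_le_card hsub
        rw [Finset.card_range] at this
        omega
      · intro hkj
        by_contra hc'
        have hyk : y < t k := lt_of_le_of_ne (not_lt.mp hc') (hyt k hk)
        have hsub : S ⊆ Finset.range k := by
          intro k' hk'
          rw [hSdef, Finset.mem_filter, Finset.mem_range] at hk'
          rw [Finset.mem_range]
          by_contra hc''
          have hk'M : k' < M := hk'.1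
          have hle : t k ≤ t k' := by
            rcases Nat.lt_or_ge k k' with h | h
            · exact le_of_lt (htmono k k' h hk'M)
            · have hkk : k = k' := by omega
              rw [hkk]
          linarith [hk'.2]
        have := Finset.card_le_card hsub
        rw [Finset.card_range] at this
        omega
    have hT2' : ∀ k < M, j ≤ k → y < t k := by
      intro k hk hjk
      have h2 : ¬ t k < y := fun hlt => by
        have := (hmemS k hk).mp hlt; omega
      exact lt_of_le_of_ne (not_lt.mp h2) (hyt k hk)
    have hMsplit : M = j + (M - j) := by omega
    have hprod : ∏ k ∈ Finset.range M, (y - t k) =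
        (∏ k ∈ Finset.range j, (y - t k)) *
          ∏ i ∈ Finset.range (M - j), (y - t (j + i)) := by
      conv_lhs => rw [hMsplit]
      exact Finset.prod_range_add _ j (M - j)
    have hA : 0 < ∏ k ∈ Finset.range j, (y - t k) := by
      apply Finset.prod_pos
      intro k hk
      rw [Finset.mem_range] at hk
      have := (hmemS k (by omega)).mpr hk
      linarith
    have hB : ∏ i ∈ Finset.range (M - j), (y - t (j + i)) =
        (-1)^(M - j) * ∏ i ∈ Finset.range (M - j), (t (j + i) - y) := by
      have e : ∀ i ∈ Finset.range (M - j), (y - t (j + i)) = (-1) * (t (j + i) - y) := by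
        intros; ring
      rw [Finset.prod_congr rfl e, Finset.prod_mul_distrib, Finset.prod_const,
        Finset.card_range]
    have hBpos : 0 < ∏ i ∈ Finset.range (M - j), (t (j + i) - y) := by
      apply Finset.prod_pos
      intro i hi
      rw [Finset.mem_range] at hi
      have := hT2' (j + i) (by omega) (by omega)
      linarith
    have hfypos : 0 < c j * f y := by
      rcases lt_trichotomy (c j * f y) 0 with h | h | h
      · exfalso
        apply hcore j hjle y hy (fun k hk hkj => (hmemS k hk).mpr hkj) hT2'
        rw [hcs j]
        nlinarith
      · exfalso
        rcases mul_eq_zero.mp h with h' | h'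
        · have := hc1 j; rw [h'] at this; simp at this
        · exact hfy h'
      · exact h
    have hcM : c M = c j * (-1)^(M - j) := by
      have hje : j + (M - j) = M := by omega
      rw [hcdef]
      dsimp only
      rw [mul_assoc, ← pow_add, hje]
    rw [hprod, hB, hcM]
    nlinarith [mul_pos hfypos (mul_pos hA hBpos), hpow_aux (M - j)]
  -- positivity of g at x 0
  have hx0I : x 0 ∈ Set.Ioo a b := hxIoo 0 (Nat.zero_le M)
  have hgx0 : 0 < g (x 0) := by
    rw [hgdef]
    dsimp only
    have hx0t : ∀ k < M, x 0 < t k := by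
      intro k hk
      have h1 : x 0 ≤ x k := by
        rcases Nat.eq_zero_or_pos k with rfl | h
        · exact le_refl _
        · exact le_of_lt (hxmono 0 k h (by omega))
      exact lt_of_le_of_ne (le_trans h1 (htge k hk))
        (fun h => hx0 (h ▸ hft k hk))
    have hprod : ∏ k ∈ Finset.range M, (x 0 - t k) =
        (-1)^M * ∏ k ∈ Finset.range M, (t k - x 0) := by
      have e : ∀ k ∈ Finset.range M, (x 0 - t k) = (-1) * (t k - x 0) := by
        intros; ring
      rw [Finset.prod_congr rfl e, Finset.prod_mul_distrib, Finset.prod_const,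
        Finset.card_range]
    have hPpos : 0 < ∏ k ∈ Finset.range M, (t k - x 0) := by
      apply Finset.prod_pos
      intro k hk
      rw [Finset.mem_range] at hk
      linarith [hx0t k hk]
    have hc0 : 0 < c 0 * f (x 0) := hsign 0 (Nat.zero_le M)
    have hcM : c M * (-1)^M = c 0 := by
      rw [hcdef]
      dsimp only
      rw [mul_assoc, hpow_aux M, pow_zero]
    rw [hprod]
    calc (0:ℝ) < (c 0 * f (x 0)) * ∏ k ∈ Finset.range M, (t k - x 0) :=
          mul_pos hc0 hPpos
    _ = c M * f (x 0) * ((-1)^M * ∏ k ∈ Finset.range M, (t k - x 0)) := by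
          rw [← hcM]; ring
  -- continuity and integrability of g
  have hgcont : ContinuousOn g (Set.Icc a b) := by
    rw [hgdef]
    exact (continuousOn_const.mul hf).mul
      (Continuous.continuousOn (continuous_finset_prod _
        (fun k _ => continuous_id.sub continuous_const)))
  have hgsub : ∀ u v : ℝ, a ≤ u → u ≤ v → v ≤ b →
      IntervalIntegrable g MeasureTheory.volume u v := by
    intro u v h1 h2 h3
    apply ContinuousOn.intervalIntegrable
    apply hgcont.mono
    rw [Set.uIcc_of_le h2]
    exact Set.Icc_subset_Icc h1 h3
  -- the integral of g is zero
  have hintg : ∀ i : ℕ, IntervalIntegrable (fun y : ℝ => y ^ i * f y)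
      MeasureTheory.volume a b := by
    intro i
    apply ContinuousOn.intervalIntegrable
    rw [Set.uIcc_of_le hab.le]
    exact (continuous_pow i).continuousOn.mul hf
  have hint : (∫ y in a..b, g y) = 0 := by
    set P : Polynomial ℝ := ∏ k ∈ Finset.range M, (Polynomial.X - Polynomial.C (t k))
      with hPdef
    have hPeval : ∀ y : ℝ, P.eval y = ∏ k ∈ Finset.range M, (y - t k) := by
      intro y; rw [hPdef]; simp [Polynomial.eval_prod]
    have hPdeg : P.natDegree = M := by
      rw [hPdef, Polynomial.natDegree_prod]
      · simp [Polynomial.natDegree_X_sub_C]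
      · intro i _; exact Polynomial.X_sub_C_ne_zero (t i)
    have h1 : (∫ y in a..b, g y)
        = ∫ y in a..b, ∑ i ∈ Finset.range (M+1), (c M * P.coeff i) * (y ^ i * f y) := by
      apply intervalIntegral.integral_congr
      intro y hy
      rw [hgdef]
      dsimp only
      have e1 : P.eval y = ∑ i ∈ Finset.range (M+1), P.coeff i * y ^ i := by
        conv_lhs => rw [Polynomial.eval_eq_sum_range]
        rw [hPdeg]
      calc c M * f y * ∏ k ∈ Finset.range M, (y - t k)
          = c M * (P.eval y * f y) := by rw [hPeval]; ring
        _ = ∑ i ∈ Finset.range (M+1), (c M * P.coeff i) * (y ^ i * f y) := by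
            rw [e1, Finset.sum_mul, Finset.mul_sum]
            apply Finset.sum_congr rfl
            intros; ring
    rw [h1, intervalIntegral.integral_finset_sum]
    · apply Finset.sum_eq_zero
      intro i hi
      rw [Finset.mem_range] at hi
      rw [intervalIntegral.integral_const_mul, hmom i (by omega), mul_zero]
    · intro i _
      exact (hintg i).const_mul _
  -- final contradiction via positivity of the integral
  obtain ⟨δ, hδ, hs⟩ := sign_stable hgcont
    ⟨le_of_lt hx0I.1, le_of_lt hx0I.2⟩ (ne_of_gt hgx0)
  set cc : ℝ := max a (x 0 - δ/2) with hccdef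
  set dd : ℝ := min b (x 0 + δ/2) with hdddef
  have hacc : a ≤ cc := le_max_left _ _
  have hddb : dd ≤ b := min_le_left _ _
  have hccdd : cc < dd := by
    rw [hccdef, hdddef]
    rw [max_lt_iff]
    constructor
    · rw [lt_min_iff]; exact ⟨hab, by linarith [hx0I.1]⟩
    · rw [lt_min_iff]; exact ⟨by linarith [hx0I.2], by linarith⟩
  have hpos : ∀ yy ∈ Set.Ioo cc dd, 0 < g yy := by
    intro yy hyy
    have hyyI : yy ∈ Set.Icc a b :=
      ⟨le_trans hacc (le_of_lt hyy.1), le_trans (le_of_lt hyy.2) hddb⟩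
    have hd1 : x 0 - δ/2 ≤ cc := le_max_right _ _
    have hd2 : dd ≤ x 0 + δ/2 := min_le_right _ _
    have hd : |yy - x 0| < δ := by
      rw [abs_lt]
      constructor
      · linarith [hyy.1]
      · linarith [hyy.2]
    have := hs yy hyyI hd
    nlinarith [hgx0]
  have e1 : (∫ y in a..cc, g y) + (∫ y in cc..dd, g y) = ∫ y in a..dd, g y :=
    intervalIntegral.integral_add_adjacent_intervals
      (hgsub a cc le_rfl hacc (le_trans hccdd.le hddb))
      (hgsub cc dd hacc hccdd.le hddb)
  have e2 : (∫ y in a..dd, g y) + (∫ y in dd..b, g y) = ∫ y in a..b, g y :=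
    intervalIntegral.integral_add_adjacent_intervals
      (hgsub a dd le_rfl (le_trans hacc hccdd.le) hddb)
      (hgsub dd b (le_trans hacc hccdd.le) hddb le_rfl)
  have p1 : 0 ≤ ∫ y in a..cc, g y :=
    intervalIntegral.integral_nonneg hacc
      (fun u hu => hg u ⟨hu.1, le_trans hu.2 (le_trans hccdd.le hddb)⟩)
  have p2 : 0 < ∫ y in cc..dd, g y :=
    intervalIntegral.intervalIntegral_pos_of_pos_on
      (hgsub cc dd hacc hccdd.le hddb) hpos hccdd
  have p3 : 0 ≤ ∫ y in dd..b, g y :=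
    intervalIntegral.integral_nonneg hddb
      (fun u hu => hg u ⟨le_trans hacc (le_trans hccdd.le hu.1), hu.2⟩)
  linarith [hint, e1, e2, p1, p2, p3]
end

section
/- (Hurwitz) Let n ≥ 1 and let f : ℝ → ℝ be continuous and 2π-periodic, not identically zero, and suppose its first n harmonics vanish: ∫_0^{2π} f(x) dx = 0 and ∫_0^{2π} f(x)·cos(kx) dx = ∫_0^{2π} f(x)·sin(kx) dx = 0 for k = 1, …, n. Then on every interval of length greater than 2π the function f changes sign at least 2n+1 times; that is, for every c ∈ ℝ and ℓ > 2π there exist points c < x₀ < x₁ < ⋯ < x_{2n+1} < c + ℓ with f(x_{i−1})·f(x_i) < 0 for every i. -/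
open Real Set
noncomputable section
namespace Hurwitz


/-- Generators of trigonometric polynomials of degree ≤ r. -/
def trigSet (r : ℕ) : Set (ℝ → ℝ) :=
  insert (fun _ => (1:ℝ))
    {h | ∃ k : ℕ, 1 ≤ k ∧ k ≤ r ∧
      (h = (fun x => Real.cos (k * x)) ∨ h = (fun x => Real.sin (k * x)))}

/-- Trigonometric polynomials of degree ≤ r. -/
def T (r : ℕ) : Submodule ℝ (ℝ → ℝ) := Submodule.span ℝ (trigSet r)

lemma T_mono {r r' : ℕ} (h : r ≤ r') : T r ≤ T r' := by
  apply Submodule.span_mono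
  rintro g (hg | ⟨k, h1, h2, h3⟩)
  · exact Or.inl hg
  · exact Or.inr ⟨k, h1, h2.trans h, h3⟩

lemma one_mem_T (r : ℕ) : (fun _ => (1:ℝ)) ∈ T r :=
  Submodule.subset_span (Set.mem_insert _ _)

lemma cos_nat_mem_T {r k : ℕ} (hk : k ≤ r) : (fun x => Real.cos (k * x)) ∈ T r := by
  rcases Nat.eq_zero_or_pos k with rfl | hk1
  · have : (fun x : ℝ => Real.cos ((0:ℕ) * x)) = fun _ => (1:ℝ) := by
      funext x; simp
    rw [this]; exact one_mem_T r
  · exact Submodule.subset_span (Or.inr ⟨k, hk1, hk, Or.inl rfl⟩)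

lemma sin_nat_mem_T {r k : ℕ} (hk : k ≤ r) : (fun x => Real.sin (k * x)) ∈ T r := by
  rcases Nat.eq_zero_or_pos k with rfl | hk1
  · have : (fun x : ℝ => Real.sin ((0:ℕ) * x)) = (0 : ℝ → ℝ) := by
      funext x; simp
    rw [this]; exact Submodule.zero_mem _
  · exact Submodule.subset_span (Or.inr ⟨k, hk1, hk, Or.inr rfl⟩)

lemma cos_mul_mem_T {r : ℕ} {h : ℝ → ℝ} (hh : h ∈ T r) :
    (fun x => Real.cos x * h x) ∈ T (r + 1) := by
  induction hh using Submodule.span_induction with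
  | mem g hg =>
    rcases hg with hg | ⟨k, hk1, hkr, hg | hg⟩
    · subst hg
      have : (fun x : ℝ => Real.cos x * 1) = fun x => Real.cos ((1:ℕ) * x) := by
        funext x; simp
      rw [this]; exact cos_nat_mem_T (by omega)
    · subst hg
      obtain ⟨j, rfl⟩ : ∃ j, k = j + 1 := ⟨k - 1, by omega⟩
      have : (fun x : ℝ => Real.cos x * Real.cos ((j + 1 : ℕ) * x)) =
          (1/2 : ℝ) • (fun x => Real.cos ((j + 2 : ℕ) * x)) +
          (1/2 : ℝ) • (fun x => Real.cos ((j : ℕ) * x)) := by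
        funext x
        simp only [Pi.add_apply, Pi.smul_apply, smul_eq_mul]
        push_cast
        have e1 : ((j:ℝ) + 2) * x = ((j:ℝ) + 1) * x + x := by ring
        have e2 : (j:ℝ) * x = ((j:ℝ) + 1) * x - x := by ring
        rw [e1, e2, Real.cos_add, Real.cos_sub]; ring
      rw [this]
      exact Submodule.add_mem _
        (Submodule.smul_mem _ _ (cos_nat_mem_T (by omega)))
        (Submodule.smul_mem _ _ (cos_nat_mem_T (by omega)))
    · subst hg
      obtain ⟨j, rfl⟩ : ∃ j, k = j + 1 := ⟨k - 1, by omega⟩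
      have : (fun x : ℝ => Real.cos x * Real.sin ((j + 1 : ℕ) * x)) =
          (1/2 : ℝ) • (fun x => Real.sin ((j + 2 : ℕ) * x)) +
          (1/2 : ℝ) • (fun x => Real.sin ((j : ℕ) * x)) := by
        funext x
        simp only [Pi.add_apply, Pi.smul_apply, smul_eq_mul]
        push_cast
        have e1 : ((j:ℝ) + 2) * x = ((j:ℝ) + 1) * x + x := by ring
        have e2 : (j:ℝ) * x = ((j:ℝ) + 1) * x - x := by ring
        rw [e1, e2, Real.sin_add, Real.sin_sub]; ring
      rw [this]
      exact Submodule.add_mem _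
        (Submodule.smul_mem _ _ (sin_nat_mem_T (by omega)))
        (Submodule.smul_mem _ _ (sin_nat_mem_T (by omega)))
  | zero =>
    have : (fun x : ℝ => Real.cos x * (0 : ℝ → ℝ) x) = (0 : ℝ → ℝ) := by
      funext x; simp
    rw [this]; exact Submodule.zero_mem _
  | add g₁ g₂ hg₁ hg₂ ih₁ ih₂ =>
    have : (fun x : ℝ => Real.cos x * (g₁ + g₂) x) =
        (fun x => Real.cos x * g₁ x) + fun x => Real.cos x * g₂ x := by
      funext x; simp [mul_add]
    rw [this]; exact Submodule.add_mem _ ih₁ ih₂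
  | smul a g hg ih =>
    have : (fun x : ℝ => Real.cos x * (a • g) x) =
        a • fun x => Real.cos x * g x := by
      funext x; simp [smul_eq_mul]; ring
    rw [this]; exact Submodule.smul_mem _ _ ih

lemma sin_mul_mem_T {r : ℕ} {h : ℝ → ℝ} (hh : h ∈ T r) :
    (fun x => Real.sin x * h x) ∈ T (r + 1) := by
  induction hh using Submodule.span_induction with
  | mem g hg =>
    rcases hg with hg | ⟨k, hk1, hkr, hg | hg⟩
    · subst hg
      have : (fun x : ℝ => Real.sin x * 1) = fun x => Real.sin ((1:ℕ) * x) := by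
        funext x; simp
      rw [this]; exact sin_nat_mem_T (by omega)
    · subst hg
      obtain ⟨j, rfl⟩ : ∃ j, k = j + 1 := ⟨k - 1, by omega⟩
      have : (fun x : ℝ => Real.sin x * Real.cos ((j + 1 : ℕ) * x)) =
          (1/2 : ℝ) • (fun x => Real.sin ((j + 2 : ℕ) * x)) +
          (-(1/2) : ℝ) • (fun x => Real.sin ((j : ℕ) * x)) := by
        funext x
        simp only [Pi.add_apply, Pi.smul_apply, smul_eq_mul]
        push_cast
        have e1 : ((j:ℝ) + 2) * x = ((j:ℝ) + 1) * x + x := by ring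
        have e2 : (j:ℝ) * x = ((j:ℝ) + 1) * x - x := by ring
        rw [e1, e2, Real.sin_add, Real.sin_sub]; ring
      rw [this]
      exact Submodule.add_mem _
        (Submodule.smul_mem _ _ (sin_nat_mem_T (by omega)))
        (Submodule.smul_mem _ _ (sin_nat_mem_T (by omega)))
    · subst hg
      obtain ⟨j, rfl⟩ : ∃ j, k = j + 1 := ⟨k - 1, by omega⟩
      have : (fun x : ℝ => Real.sin x * Real.sin ((j + 1 : ℕ) * x)) =
          (1/2 : ℝ) • (fun x => Real.cos ((j : ℕ) * x)) +
          (-(1/2) : ℝ) • (fun x => Real.cos ((j + 2 : ℕ) * x)) := by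
        funext x
        simp only [Pi.add_apply, Pi.smul_apply, smul_eq_mul]
        push_cast
        have e1 : ((j:ℝ) + 2) * x = ((j:ℝ) + 1) * x + x := by ring
        have e2 : (j:ℝ) * x = ((j:ℝ) + 1) * x - x := by ring
        rw [e1, e2, Real.cos_add, Real.cos_sub]; ring
      rw [this]
      exact Submodule.add_mem _
        (Submodule.smul_mem _ _ (cos_nat_mem_T (by omega)))
        (Submodule.smul_mem _ _ (cos_nat_mem_T (by omega)))
  | zero =>
    have : (fun x : ℝ => Real.sin x * (0 : ℝ → ℝ) x) = (0 : ℝ → ℝ) := by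
      funext x; simp
    rw [this]; exact Submodule.zero_mem _
  | add g₁ g₂ hg₁ hg₂ ih₁ ih₂ =>
    have : (fun x : ℝ => Real.sin x * (g₁ + g₂) x) =
        (fun x => Real.sin x * g₁ x) + fun x => Real.sin x * g₂ x := by
      funext x; simp [mul_add]
    rw [this]; exact Submodule.add_mem _ ih₁ ih₂
  | smul a g hg ih =>
    have : (fun x : ℝ => Real.sin x * (a • g) x) =
        a • fun x => Real.sin x * g x := by
      funext x; simp [smul_eq_mul]; ring
    rw [this]; exact Submodule.smul_mem _ _ ih

lemma pair_mul_mem_T {r : ℕ} {h : ℝ → ℝ} (u v : ℝ) (hh : h ∈ T r) :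
    (fun x => Real.sin ((x - u)/2) * Real.sin ((x - v)/2) * h x) ∈ T (r + 1) := by
  have key : ∀ x : ℝ, Real.sin ((x - u)/2) * Real.sin ((x - v)/2) =
      Real.cos ((u - v)/2) / 2 - Real.cos ((u + v)/2) / 2 * Real.cos x
        - Real.sin ((u + v)/2) / 2 * Real.sin x := by
    intro x
    have h1 := Real.cos_sub ((x - u)/2) ((x - v)/2)
    have h2 := Real.cos_add ((x - u)/2) ((x - v)/2)
    have e1 : (x - u)/2 - (x - v)/2 = -((u - v)/2) := by ring
    have e2 : (x - u)/2 + (x - v)/2 = x - (u + v)/2 := by ring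
    rw [e1, Real.cos_neg] at h1
    rw [e2, Real.cos_sub] at h2
    linarith
  have : (fun x => Real.sin ((x - u)/2) * Real.sin ((x - v)/2) * h x) =
      (Real.cos ((u - v)/2) / 2) • h +
      (-(Real.cos ((u + v)/2) / 2)) • (fun x => Real.cos x * h x) +
      (-(Real.sin ((u + v)/2) / 2)) • (fun x => Real.sin x * h x) := by
    funext x
    simp only [Pi.add_apply, Pi.smul_apply, smul_eq_mul]
    linear_combination (key x) * h x
  rw [this]
  exact Submodule.add_mem _
    (Submodule.add_mem _
      (Submodule.smul_mem _ _ (T_mono (Nat.le_succ r) hh))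
      (Submodule.smul_mem _ _ (cos_mul_mem_T hh)))
    (Submodule.smul_mem _ _ (sin_mul_mem_T hh))

lemma prod_pairs_mem_T (p : ℕ) (t : ℕ → ℝ) :
    (fun z => ∏ j ∈ Finset.range (2 * p), Real.sin ((z - t j)/2)) ∈ T p := by
  induction p with
  | zero =>
    have : (fun z : ℝ => ∏ j ∈ Finset.range 0, Real.sin ((z - t j)/2)) =
        fun _ => (1:ℝ) := by funext z; simp
    rw [this]; exact one_mem_T 0
  | succ p ih =>
    have : (fun z : ℝ => ∏ j ∈ Finset.range (2 * (p + 1)), Real.sin ((z - t j)/2)) =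
        fun z => Real.sin ((z - t (2 * p))/2) * Real.sin ((z - t (2 * p + 1))/2) *
          ∏ j ∈ Finset.range (2 * p), Real.sin ((z - t j)/2) := by
      funext z
      have : 2 * (p + 1) = (2 * p) + 1 + 1 := by omega
      rw [this, Finset.prod_range_succ, Finset.prod_range_succ]
      ring
    rw [this]
    exact pair_mul_mem_T _ _ ih

lemma ortho {n : ℕ} {f : ℝ → ℝ} (hf : Continuous f)
    (h0 : ∫ x in (0:ℝ)..(2 * Real.pi), f x = 0)
    (hcos : ∀ k : ℕ, 1 ≤ k → k ≤ n →
      (∫ x in (0:ℝ)..(2 * Real.pi), f x * Real.cos (k * x)) = 0)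
    (hsin : ∀ k : ℕ, 1 ≤ k → k ≤ n →
      (∫ x in (0:ℝ)..(2 * Real.pi), f x * Real.sin (k * x)) = 0)
    {g : ℝ → ℝ} (hg : g ∈ T n) :
    Continuous g ∧ ∫ x in (0:ℝ)..(2 * Real.pi), f x * g x = 0 := by
  induction hg using Submodule.span_induction with
  | mem g hgen =>
    rcases hgen with hgen | ⟨k, hk1, hkn, hgen | hgen⟩
    · subst hgen
      refine ⟨continuous_const, ?_⟩
      simpa using h0
    · subst hgen
      exact ⟨Real.continuous_cos.comp (continuous_const.mul continuous_id),
        hcos k hk1 hkn⟩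
    · subst hgen
      exact ⟨Real.continuous_sin.comp (continuous_const.mul continuous_id),
        hsin k hk1 hkn⟩
  | zero =>
    refine ⟨continuous_const, ?_⟩
    simp
  | add g₁ g₂ hg₁ hg₂ ih₁ ih₂ =>
    refine ⟨ih₁.1.add ih₂.1, ?_⟩
    have : ∀ x : ℝ, f x * (g₁ + g₂) x = f x * g₁ x + f x * g₂ x := by
      intro x; simp [mul_add]
    simp only [this]
    rw [intervalIntegral.integral_add (f := fun x => f x * g₁ x) (g := fun x => f x * g₂ x)
      ((hf.mul ih₁.1).intervalIntegrable _ _)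
      ((hf.mul ih₂.1).intervalIntegrable _ _), ih₁.2, ih₂.2, add_zero]
  | smul a g hg ih =>
    refine ⟨ih.1.const_smul a, ?_⟩
    have : ∀ x : ℝ, f x * (a • g) x = a * (f x * g x) := by
      intro x; simp [smul_eq_mul]; ring
    simp only [this]
    rw [intervalIntegral.integral_const_mul, ih.2, mul_zero]



-- test orthogonality lemma & positivity separately against dummy T
lemma integral_pos_helper {h : ℝ → ℝ} {A B y : ℝ} (hAB : A < B) (hc : Continuous h)
    (h0 : ∀ x ∈ Set.Icc A B, 0 ≤ h x) (hy : y ∈ Set.Icc A B) (hpos : 0 < h y) :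
    0 < ∫ x in A..B, h x := by
  have hcont : ContinuousAt h y := hc.continuousAt
  rw [Metric.continuousAt_iff] at hcont
  obtain ⟨δ, hδ, hball⟩ := hcont (h y / 2) (by positivity)
  set u := max A (y - δ/2) with hu_def
  set v := min B (y + δ/2) with hv_def
  have hAu : A ≤ u := le_max_left _ _
  have hvB : v ≤ B := min_le_left _ _
  have huv : u < v := by
    apply max_lt <;> apply lt_min
    · exact hAB
    · linarith [hy.1]
    · linarith [hy.2]
    · linarith
  have hmid : ∀ x ∈ Set.Icc u v, h y / 2 ≤ h x := by
    intro x hx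
    have h1 : y - δ/2 ≤ x := le_trans (le_max_right _ _) hx.1
    have h2 : x ≤ y + δ/2 := le_trans hx.2 (min_le_right _ _)
    have : dist x y < δ := by
      rw [Real.dist_eq, abs_lt]; constructor <;> linarith
    have := hball this
    rw [Real.dist_eq, abs_lt] at this
    linarith [this.1, this.2]
  have e : ∫ x in A..B, h x =
      (∫ x in A..u, h x) + ((∫ x in u..v, h x) + ∫ x in v..B, h x) := by
    rw [intervalIntegral.integral_add_adjacent_intervals
      (hc.intervalIntegrable u v) (hc.intervalIntegrable v B)]
    rw [intervalIntegral.integral_add_adjacent_intervals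
      (hc.intervalIntegrable A u) (hc.intervalIntegrable u B)]
  have h1 : 0 ≤ ∫ x in A..u, h x := by
    apply intervalIntegral.integral_nonneg hAu
    intro x hx
    exact h0 x ⟨hx.1, le_trans hx.2 (le_trans huv.le hvB)⟩
  have h3 : 0 ≤ ∫ x in v..B, h x := by
    apply intervalIntegral.integral_nonneg hvB
    intro x hx
    exact h0 x ⟨le_trans hAu (le_trans huv.le hx.1), hx.2⟩
  have h2 : (v - u) * (h y / 2) ≤ ∫ x in u..v, h x := by
    have := intervalIntegral.integral_mono_on huv.le
      (intervalIntegrable_const (c := h y / 2) (μ := MeasureTheory.volume)) (hc.intervalIntegrable u v) hmid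
    rwa [intervalIntegral.integral_const, smul_eq_mul] at this
  have hpos2 : 0 < (v - u) * (h y / 2) := by
    apply mul_pos (by linarith) (by linarith)
  linarith



lemma neg_one_pow_or (i : ℕ) : (-1:ℝ)^i = 1 ∨ (-1:ℝ)^i = -1 := by
  rcases Nat.even_or_odd i with h | h
  · exact Or.inl h.neg_one_pow
  · exact Or.inr h.neg_one_pow

lemma opp_prod {u A B : ℝ} (hu : u = 1 ∨ u = -1) (hA : 0 < u * A) (hB : u * B < 0) :
    A * B < 0 := by rcases hu with rfl | rfl <;> nlinarith

lemma chain_mono {x : ℕ → ℝ} {m : ℕ} (hc : ∀ i, i < m → x i < x (i+1)) :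
    ∀ i j, i ≤ j → j ≤ m → x i ≤ x j := by
  intro i j hij
  induction j, hij using Nat.le_induction with
  | base => intro _; exact le_rfl
  | succ j hj ih =>
    intro hjm
    exact le_trans (ih (by omega)) (hc j (by omega)).le

lemma sign_chain {f : ℝ → ℝ} {x : ℕ → ℝ} {m : ℕ} (h0 : 0 < f (x 0))
    (hc : ∀ i, i < m → f (x i) * f (x (i+1)) < 0) :
    ∀ i, i ≤ m → 0 < (-1:ℝ)^i * f (x i) := by
  intro i
  induction i with
  | zero => intro _; simpa using h0
  | succ i ih =>
    intro him
    have h1 := ih (by omega)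
    have h2 := hc i (by omega)
    rw [pow_succ]
    rcases Nat.even_or_odd i with hp | hp
    · rw [Even.neg_one_pow hp] at h1 ⊢; nlinarith
    · rw [Odd.neg_one_pow hp] at h1 ⊢; nlinarith

lemma prod_neg_eq (s : Finset ℕ) (f : ℕ → ℝ) :
    ∏ j ∈ s, (-(f j)) = (-1:ℝ)^s.card * ∏ j ∈ s, f j := by
  calc ∏ j ∈ s, (-(f j)) = ∏ j ∈ s, ((-1:ℝ) * f j) :=
        Finset.prod_congr rfl (fun j _ => (neg_one_mul (f j)).symm)
    _ = (∏ _j ∈ s, (-1:ℝ)) * ∏ j ∈ s, f j := Finset.prod_mul_distrib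
    _ = (-1:ℝ)^s.card * ∏ j ∈ s, f j := by rw [Finset.prod_const]


set_option maxHeartbeats 1600000 in
lemma core (n : ℕ) {f : ℝ → ℝ} (hf : Continuous f)
    (hper : Function.Periodic f (2 * Real.pi))
    (hI0 : ∫ x in (0:ℝ)..(2 * Real.pi), f x = 0)
    (hcos : ∀ k : ℕ, 1 ≤ k → k ≤ n →
      (∫ x in (0:ℝ)..(2 * Real.pi), f x * Real.cos (k * x)) = 0)
    (hsin : ∀ k : ℕ, 1 ≤ k → k ≤ n →
      (∫ x in (0:ℝ)..(2 * Real.pi), f x * Real.sin (k * x)) = 0)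
    {a : ℝ} (ha : 0 < f a) :
    ∃ y : ℕ → ℝ,
      (∀ i, i < 2*n+1 → y i < y (i+1) ∧ f (y i) * f (y (i+1)) < 0) ∧
      (∀ i, i ≤ 2*n+1 → y i ∈ Set.Ico a (a + 2*Real.pi)) := by
  classical
  have hπ : (0:ℝ) < 2 * Real.pi := by positivity
  by_contra hcon
  set Q : ℕ → Prop := fun m => ∃ x : ℕ → ℝ, x 0 = a ∧
      (∀ i, i ≤ m → x i ∈ Set.Icc a (a + 2*Real.pi)) ∧
      (∀ i, i < m → x i < x (i+1) ∧ f (x i) * f (x (i+1)) < 0) with hQdef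
  have hQ0 : Q 0 :=
    ⟨fun _ => a, rfl, fun i _ => ⟨le_refl a, by linarith⟩, fun i h => absurd h (by omega)⟩
  have hQtrunc : ∀ m k, k ≤ m → Q m → Q k := by
    rintro m k hkm ⟨x, h1, h2, h3⟩
    exact ⟨x, h1, fun i hi => h2 i (hi.trans hkm), fun i hi => h3 i (by omega)⟩
  have hQtop : ¬ Q (2*n+1) := by
    rintro ⟨x, hx0, hxI, hxc⟩
    apply hcon
    have hsc := sign_chain (m := 2*n+1) (by rw [hx0]; exact ha) (fun i hi => (hxc i hi).2)
    have hlast : x (2*n+1) < a + 2*Real.pi := by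
      rcases lt_or_eq_of_le (hxI (2*n+1) le_rfl).2 with h | h
      · exact h
      · exfalso
        have h1 := hsc (2*n+1) le_rfl
        have hodd : Odd (2*n+1) := ⟨n, by ring⟩
        rw [Odd.neg_one_pow hodd, h, hper a] at h1
        linarith
    exact ⟨x, fun i hi => hxc i hi, fun i hi =>
      ⟨(hxI i hi).1,
        lt_of_le_of_lt (chain_mono (fun j hj => (hxc j hj).1) i (2*n+1) hi le_rfl) hlast⟩⟩
  have notQabove : ∀ k, 2*n+1 ≤ k → ¬ Q k := fun k hk hQk =>
    hQtop (hQtrunc k (2*n+1) hk hQk)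
  set m := Nat.findGreatest Q (2*n) with hm
  have hQm : Q m := Nat.findGreatest_spec (Nat.zero_le _) hQ0
  have hmle : m ≤ 2*n := Nat.findGreatest_le _
  have hmax : ∀ k, m < k → ¬ Q k := by
    intro k hk
    rcases le_or_gt k (2*n) with h | h
    · exact Nat.findGreatest_is_greatest hk h
    · exact notQabove k (by omega)
  obtain ⟨x, hx0, hxI, hxc⟩ := hQm
  have hmono := chain_mono (m := m) (fun i hi => (hxc i hi).1)
  have hsc : ∀ i, i ≤ m → 0 < (-1:ℝ)^i * f (x i) :=
    sign_chain (by rw [hx0]; exact ha) (fun i hi => (hxc i hi).2)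
  -- m is even
  have hmeven : Even m := by
    by_contra hodd'
    rw [Nat.not_even_iff_odd] at hodd'
    have hlt : x m < a + 2*Real.pi := by
      rcases lt_or_eq_of_le (hxI m le_rfl).2 with h | h
      · exact h
      · exfalso
        have h1 := hsc m le_rfl
        rw [Odd.neg_one_pow hodd', h, hper a] at h1
        linarith
    apply hmax (m+1) (by omega)
    refine ⟨fun j => if j ≤ m then x j else a + 2*Real.pi,
      by simp only [if_pos (Nat.zero_le m)]; exact hx0, ?_, ?_⟩
    · intro i _
      by_cases h : i ≤ m
      · simp only [if_pos h]; exact hxI i h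
      · simp only [if_neg h]; exact ⟨by linarith, le_refl _⟩
    · intro i hi
      by_cases h : i < m
      · simp only [if_pos (by omega : i ≤ m), if_pos (by omega : i + 1 ≤ m)]
        exact hxc i h
      · have hieq : i = m := by omega
        subst hieq
        simp only [if_pos (le_refl m), if_neg (by omega : ¬ m + 1 ≤ m)]
        refine ⟨hlt, ?_⟩
        have h1 := hsc m le_rfl
        rw [Odd.neg_one_pow hodd'] at h1
        rw [hper a]
        nlinarith
  -- no extension to the right
  have noext : ∀ y, x m ≤ y → y ≤ a + 2*Real.pi → 0 ≤ (-1:ℝ)^m * f y := by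
    intro y h1 h2
    rcases eq_or_lt_of_le h1 with heq | h1'
    · rw [← heq]; exact (hsc m le_rfl).le
    by_contra hneg
    push_neg at hneg
    apply hmax (m+1) (by omega)
    refine ⟨fun j => if j ≤ m then x j else y,
      by simp only [if_pos (Nat.zero_le m)]; exact hx0, ?_, ?_⟩
    · intro i _
      by_cases h : i ≤ m
      · simp only [if_pos h]; exact hxI i h
      · simp only [if_neg h]
        refine ⟨?_, h2⟩
        have : a ≤ x m := by rw [← hx0]; exact hmono 0 m (Nat.zero_le m) le_rfl
        linarith
    · intro i hi
      by_cases h : i < m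
      · simp only [if_pos (by omega : i ≤ m), if_pos (by omega : i + 1 ≤ m)]
        exact hxc i h
      · have hieq : i = m := by omega
        subst hieq
        simp only [if_pos (le_refl m), if_neg (by omega : ¬ m + 1 ≤ m)]
        refine ⟨h1', ?_⟩
        have hm1 := hsc m le_rfl
        rw [Even.neg_one_pow hmeven] at hm1 hneg
        nlinarith
  -- no double switch inside a gap
  have noswitch : ∀ i, i < m → ¬ ∃ y₁ y₂, x i < y₁ ∧ y₁ < y₂ ∧ y₂ < x (i+1) ∧
      (-1:ℝ)^i * f y₁ < 0 ∧ 0 < (-1:ℝ)^i * f y₂ := by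
    rintro i hi ⟨y₁, y₂, hy1, hy12, hy2, hs1, hs2⟩
    apply hmax (m+2) (by omega)
    have hxia : a ≤ x i := (hxI i (by omega)).1
    have hxi1 : x (i+1) ≤ a + 2*Real.pi := (hxI (i+1) (by omega)).2
    refine ⟨fun j => if j ≤ i then x j else if j = i+1 then y₁ else
      if j = i+2 then y₂ else x (j-2), by simp only [if_pos (Nat.zero_le i)]; exact hx0, ?_, ?_⟩
    · intro j _
      by_cases h1 : j ≤ i
      · simp only [if_pos h1]; exact hxI j (by omega)
      · by_cases h2 : j = i+1
        · simp only [if_neg h1, if_pos h2]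
          constructor
          · linarith
          · linarith
        · by_cases h3 : j = i+2
          · simp only [if_neg h1, if_neg h2, if_pos h3]
            constructor
            · linarith
            · linarith
          · simp only [if_neg h1, if_neg h2, if_neg h3]
            exact hxI (j-2) (by omega)
    · intro j hj
      have hup : (-1:ℝ)^(i+1) = -((-1:ℝ)^i) := by rw [pow_succ]; ring
      by_cases h1 : j + 1 ≤ i
      beta_reduce
      · rw [if_pos (show j ≤ i by omega), if_pos h1]
        exact hxc j (by omega)
      · by_cases h2 : j = i
        · subst h2
          beta_reduce
          rw [if_pos (le_refl j), if_neg (show ¬ j + 1 ≤ j by omega),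
            if_pos (rfl : j + 1 = j + 1)]
          refine ⟨hy1, ?_⟩
          exact opp_prod (neg_one_pow_or j) (hsc j (by omega)) hs1
        · by_cases h3 : j = i+1
          · subst h3
            beta_reduce
            rw [if_neg (show ¬ i + 1 ≤ i by omega), if_pos (rfl : i + 1 = i + 1),
              if_neg (show ¬ i + 1 + 1 ≤ i by omega), if_neg (show ¬ i + 1 + 1 = i + 1 by omega),
              if_pos (show i + 1 + 1 = i + 2 by omega)]
            refine ⟨hy12, ?_⟩
            refine opp_prod (u := -((-1:ℝ)^i)) ?_ (by linarith) (by linarith)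
            rcases neg_one_pow_or i with h | h <;> rw [h] <;> norm_num
          · by_cases h4 : j = i+2
            · subst h4
              beta_reduce
              rw [if_neg (show ¬ i + 2 ≤ i by omega), if_neg (show ¬ i + 2 = i + 1 by omega),
                if_pos (rfl : i + 2 = i + 2), if_neg (show ¬ i + 2 + 1 ≤ i by omega),
                if_neg (show ¬ i + 2 + 1 = i + 1 by omega), if_neg (show ¬ i + 2 + 1 = i + 2 by omega),
                show i + 2 + 1 - 2 = i + 1 from by omega]
              refine ⟨hy2, ?_⟩
              have hxi1s := hsc (i+1) (by omega)
              rw [hup] at hxi1s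
              exact opp_prod (neg_one_pow_or i) hs2 (by linarith)
            · have h5 : i + 3 ≤ j := by omega
              beta_reduce
              rw [if_neg (show ¬ j ≤ i by omega), if_neg (show ¬ j = i + 1 by omega),
                if_neg (show ¬ j = i + 2 by omega), if_neg (show ¬ j + 1 ≤ i by omega),
                if_neg (show ¬ j + 1 = i + 1 by omega), if_neg (show ¬ j + 1 = i + 2 by omega),
                show j + 1 - 2 = j - 2 + 1 from by omega]
              exact hxc (j-2) (by omega)
  -- switch points inside the gaps
  set S : ℕ → Set ℝ := fun i => {z | z ∈ Set.Icc (x i) (x (i+1)) ∧ (-1:ℝ)^i * f z < 0}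
    with hSdef
  set τ : ℕ → ℝ := fun i => sInf (S i) with hτdef
  have hSne : ∀ i, i < m → x (i+1) ∈ S i := by
    intro i hi
    refine ⟨⟨(hxc i hi).1.le, le_rfl⟩, ?_⟩
    have h1 := hsc (i+1) (by omega)
    rw [pow_succ] at h1
    nlinarith
  have hSbdd : ∀ i, BddBelow (S i) := fun i => ⟨x i, fun z hz => hz.1.1⟩
  have hτmem : ∀ i, i < m → τ i ∈ Set.Icc (x i) (x (i+1)) := fun i hi =>
    ⟨le_csInf ⟨_, hSne i hi⟩ (fun z hz => hz.1.1), csInf_le (hSbdd i) (hSne i hi)⟩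
  have hτeq : ∀ i, τ i = sInf (S i) := fun _ => rfl
  have hleft : ∀ i, i < m → ∀ z, x i ≤ z → z ≤ τ i → 0 ≤ (-1:ℝ)^i * f z := by
    intro i hi z h1 h2
    rcases eq_or_lt_of_le h2 with heq | h2'
    · -- z = τ i
      by_contra hneg
      push_neg at hneg
      rcases eq_or_lt_of_le h1 with heq2 | hlt2
      · have := hsc i (by omega); rw [heq2] at this; linarith
      · have hcont : ContinuousAt (fun w => (-1:ℝ)^i * f w) z :=
          (continuous_const.mul hf).continuousAt
        rw [Metric.continuousAt_iff] at hcont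
        obtain ⟨δ, hδ, hball⟩ := hcont (-((-1:ℝ)^i * f z)) (by linarith)
        set w := max (x i) (z - δ/2) with hw
        have hw1 : x i ≤ w := le_max_left _ _
        have hw2 : w < z := max_lt hlt2 (by linarith)
        have hdist : dist w z < δ := by
          rw [Real.dist_eq, abs_lt]
          constructor
          · have := le_max_right (x i) (z - δ/2); linarith
          · linarith
        have hb := hball hdist
        rw [Real.dist_eq, abs_lt] at hb
        have hWneg : (-1:ℝ)^i * f w < 0 := by linarith [hb.2]
        have hwS : w ∈ S i :=
          ⟨⟨hw1, le_trans hw2.le (by rw [heq]; exact (hτmem i hi).2)⟩, hWneg⟩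
        have hinf := csInf_le (hSbdd i) hwS
        rw [← hτeq i] at hinf
        linarith
    · -- z < τ i
      by_contra hneg
      push_neg at hneg
      have hzS : z ∈ S i := ⟨⟨h1, le_trans h2'.le (hτmem i hi).2⟩, hneg⟩
      have hinf := csInf_le (hSbdd i) hzS
      rw [← hτeq i] at hinf
      linarith
  have hright : ∀ i, i < m → ∀ z, τ i ≤ z → z ≤ x (i+1) → (-1:ℝ)^i * f z ≤ 0 := by
    intro i hi z h1 h2
    by_contra hneg
    push_neg at hneg
    have hz_ne : z < x (i+1) := by
      rcases eq_or_lt_of_le h2 with heq | h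
      · exfalso
        have hxi1s := hsc (i+1) (by omega)
        rw [pow_succ] at hxi1s
        rw [heq] at hneg
        nlinarith
      · exact h
    rcases eq_or_lt_of_le h1 with heq | hlt
    · -- z = τ i
      have hcont : ContinuousAt (fun w => (-1:ℝ)^i * f w) z :=
        (continuous_const.mul hf).continuousAt
      rw [Metric.continuousAt_iff] at hcont
      obtain ⟨δ, hδ, hball⟩ := hcont ((-1:ℝ)^i * f z) (by linarith)
      obtain ⟨s, hsS, hs_lt⟩ := exists_lt_of_csInf_lt ⟨_, hSne i hi⟩
        (show sInf (S i) < z + δ by rw [← hτeq i, heq]; linarith)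
      have hs_ge : τ i ≤ s := by rw [hτeq i]; exact csInf_le (hSbdd i) hsS
      have hdist : dist s z < δ := by
        rw [Real.dist_eq, abs_lt]
        constructor
        · have : z ≤ s := heq ▸ hs_ge; linarith
        · linarith
      have hb := hball hdist
      rw [Real.dist_eq, abs_lt] at hb
      have := hsS.2
      linarith [hb.1]
    · -- τ i < z
      obtain ⟨s, hsS, hs_lt⟩ := exists_lt_of_csInf_lt ⟨_, hSne i hi⟩ (by rw [← hτeq i]; exact hlt)
      have hs_gt : x i < s := by
        rcases eq_or_lt_of_le hsS.1.1 with heq | h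
        · exfalso
          have h1' := hsc i (by omega)
          have h2' := hsS.2
          rw [← heq] at h2'
          linarith
        · exact h
      exact noswitch i hi ⟨s, z, hs_gt, hs_lt, hz_ne, hsS.2, hneg⟩
  have hτzero : ∀ i, i < m → f (τ i) = 0 := by
    intro i hi
    have h1 := hleft i hi (τ i) (hτmem i hi).1 le_rfl
    have h2 := hright i hi (τ i) le_rfl (hτmem i hi).2
    have h3 : (-1:ℝ)^i * f (τ i) = 0 := le_antisymm h2 h1
    rcases neg_one_pow_or i with h | h <;> rw [h] at h3 <;> linarith
  have hτin : ∀ i, i < m → x i < τ i ∧ τ i < x (i+1) := by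
    intro i hi
    constructor
    · rcases eq_or_lt_of_le (hτmem i hi).1 with heq | h
      · exfalso
        have h1' := hsc i (by omega)
        have h2' := hτzero i hi
        rw [← heq] at h2'
        rw [h2'] at h1'
        simp at h1'
      · exact h
    · rcases eq_or_lt_of_le (hτmem i hi).2 with heq | h
      · exfalso
        have h1' := hsc (i+1) (by omega)
        have h2' := hτzero i hi
        rw [heq] at h2'
        rw [h2'] at h1'
        simp at h1'
      · exact h
  -- the partition points
  set t : ℕ → ℝ := fun j => if j = 0 then a else if j ≤ m then τ (j-1) else a + 2*Real.pi
    with htdef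
  have ht0 : t 0 = a := by simp [htdef]
  have httop : ∀ j, m < j → t j = a + 2*Real.pi := by
    intro j hj
    simp only [htdef]
    rw [if_neg (by omega), if_neg (by omega)]
  have htval : ∀ j, 1 ≤ j → j ≤ m → t j = τ (j-1) := by
    intro j h1 h2
    simp only [htdef]
    rw [if_neg (by omega), if_pos h2]
  have htsucc : ∀ j, t j ≤ t (j+1) := by
    intro j
    rcases Nat.eq_zero_or_pos j with rfl | hj1
    · rw [ht0]
      rcases Nat.eq_zero_or_pos m with hm0 | hmpos
      · rw [httop 1 (by omega)]; linarith
      · rw [htval 1 le_rfl hmpos]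
        have := (hτmem 0 hmpos).1
        rw [hx0] at this
        simpa using this
    · rcases le_or_gt (j+1) m with h | h
      · rw [htval j hj1 (by omega), htval (j+1) (by omega) h]
        have e : j + 1 - 1 = j := by omega
        rw [e]
        have h1 := (hτmem (j-1) (by omega)).2
        have h2 := (hτmem j (by omega)).1
        have e2 : j - 1 + 1 = j := by omega
        rw [e2] at h1
        linarith
      · rcases le_or_gt j m with h2 | h2
        · rw [htval j hj1 h2, httop (j+1) (by omega)]
          have h1 := (hτmem (j-1) (by omega)).2
          have h3 := (hxI (j-1+1) (by omega)).2
          linarith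
        · rw [httop j h2, httop (j+1) (by omega)]
  have htmono : Monotone t := monotone_nat_of_le_succ htsucc
  -- the product function
  set g : ℝ → ℝ := fun z => ∏ j ∈ Finset.range m, Real.sin ((z - τ j)/2) with hgdef
  -- pointwise nonnegativity of f * g on the period
  have hFG : ∀ z ∈ Set.Icc a (a + 2*Real.pi), 0 ≤ f z * g z := by
    intro z hz
    obtain ⟨i, hi_le, hti, hgr⟩ :
        ∃ i, i ≤ m ∧ t i ≤ z ∧ ∀ k, i < k → k ≤ m → ¬ t k ≤ z := by
      refine ⟨Nat.findGreatest (fun j => t j ≤ z) m, Nat.findGreatest_le _,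
        Nat.findGreatest_spec (P := fun j => t j ≤ z) (Nat.zero_le m)
          (show t 0 ≤ z by rw [ht0]; exact hz.1),
        fun k hk hkm => Nat.findGreatest_is_greatest hk hkm⟩
    have hti1 : z ≤ t (i+1) := by
      rcases lt_or_ge i m with h | h
      · by_contra hcon2
        push_neg at hcon2
        exact hgr (i+1) (by omega) (by omega) hcon2.le
      · rw [httop (i+1) (by omega)]
        exact hz.2
    -- sign of f on the arc
    have hfz : 0 ≤ (-1:ℝ)^i * f z := by
      rcases Nat.eq_zero_or_pos i with rfl | hipos
      · rcases Nat.eq_zero_or_pos m with hm0 | hmpos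
        · have h1 := noext z (by rw [hm0, hx0]; exact hz.1) hz.2
          rw [hm0] at h1
          simpa using h1
        · have h1 : t 1 = τ 0 := htval 1 le_rfl hmpos
          have h2 := hleft 0 hmpos z (by rw [hx0]; exact hz.1) (by rw [← h1]; exact hti1)
          simpa using h2
      · have hti_eq : t i = τ (i-1) := htval i hipos hi_le
        rcases le_or_gt z (x i) with hcase | hcase
        · have hzi : τ (i-1) ≤ z := by rw [← hti_eq]; exact hti
          have e : i - 1 + 1 = i := by omega
          have h2 := hright (i-1) (by omega) z hzi (by rw [e]; exact hcase)
          have hp : (-1:ℝ)^i = -((-1:ℝ)^(i-1)) := by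
            conv_lhs => rw [← e]
            rw [pow_succ]; ring
          rw [hp]
          linarith
        · rcases lt_or_ge i m with him | him
          · have h1 : t (i+1) = τ i := by
              rw [htval (i+1) (by omega) (by omega)]
              simp
            exact hleft i him z hcase.le (by rw [← h1]; exact hti1)
          · have hieq : i = m := by omega
            rw [hieq]
            exact noext z (by rw [← hieq]; exact hcase.le) hz.2
    -- sign of g on the arc
    have hgz : 0 ≤ (-1:ℝ)^i * g z := by
      have hsplit : g z = (∏ j ∈ Finset.range i, Real.sin ((z - τ j)/2)) *
          ∏ j ∈ Finset.Ico i m, Real.sin ((z - τ j)/2) := by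
        simp only [hgdef]
        rw [Finset.range_eq_Ico, ← Finset.prod_Ico_consecutive _ (Nat.zero_le i) hi_le,
          ← Finset.range_eq_Ico]
      have h1 : 0 ≤ ∏ j ∈ Finset.range i, Real.sin ((z - τ j)/2) := by
        apply Finset.prod_nonneg
        intro j hj
        rw [Finset.mem_range] at hj
        have hτj : τ j ≤ z := by
          have e : t (j+1) = τ j := by
            rw [htval (j+1) (by omega) (by omega)]
            simp
          calc τ j = t (j+1) := e.symm
            _ ≤ t i := htmono (by omega)
            _ ≤ z := hti
        have hxja : a ≤ x j := (hxI j (by omega)).1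
        have hxjτ : x j ≤ τ j := (hτmem j (by omega)).1
        apply Real.sin_nonneg_of_nonneg_of_le_pi
        · linarith
        · nlinarith [hz.2]
      have h2 : 0 ≤ (-1:ℝ)^(m - i) * ∏ j ∈ Finset.Ico i m, Real.sin ((z - τ j)/2) := by
        have he : ∏ j ∈ Finset.Ico i m, Real.sin ((z - τ j)/2) =
            (-1:ℝ)^(m - i) * ∏ j ∈ Finset.Ico i m, Real.sin ((τ j - z)/2) := by
          have hc : ∀ j ∈ Finset.Ico i m, Real.sin ((z - τ j)/2) =
              -(Real.sin ((τ j - z)/2)) := by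
            intro j _
            rw [show (z - τ j)/2 = -((τ j - z)/2) by ring, Real.sin_neg]
          rw [Finset.prod_congr rfl hc, prod_neg_eq, Nat.card_Ico]
        rw [he, ← mul_assoc, ← pow_add]
        have hev : (-1:ℝ)^(m - i + (m - i)) = 1 := Even.neg_one_pow ⟨m - i, rfl⟩
        rw [hev, one_mul]
        apply Finset.prod_nonneg
        intro j hj
        rw [Finset.mem_Ico] at hj
        have hτj : z ≤ τ j := by
          have e : t (j+1) = τ j := by
            rw [htval (j+1) (by omega) (by omega)]
            simp
          calc z ≤ t (i+1) := hti1
            _ ≤ t (j+1) := htmono (by omega)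
            _ = τ j := e
        have hτx : τ j ≤ x (j+1) := (hτmem j hj.2).2
        have hx2π : x (j+1) ≤ a + 2*Real.pi := (hxI (j+1) (by omega)).2
        apply Real.sin_nonneg_of_nonneg_of_le_pi
        · linarith
        · nlinarith [hz.1]
      have hpow : (-1:ℝ)^i = (-1:ℝ)^(m - i) := by
        rcases Nat.even_or_odd i with h | h
        · have : Even (m - i) := (Nat.even_sub hi_le).2 (by simp [hmeven, h])
          rw [h.neg_one_pow, this.neg_one_pow]
        · have : ¬ Even (m - i) := by
            rw [Nat.even_sub hi_le]
            simp [hmeven, Nat.not_even_iff_odd.mpr h]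
          rw [Nat.not_even_iff_odd] at this
          rw [h.neg_one_pow, this.neg_one_pow]
      rw [hsplit, hpow]
      calc (0:ℝ) ≤ (∏ j ∈ Finset.range i, Real.sin ((z - τ j)/2)) *
            ((-1:ℝ)^(m - i) * ∏ j ∈ Finset.Ico i m, Real.sin ((z - τ j)/2)) :=
          mul_nonneg h1 h2
        _ = (-1:ℝ)^(m - i) * ((∏ j ∈ Finset.range i, Real.sin ((z - τ j)/2)) *
            ∏ j ∈ Finset.Ico i m, Real.sin ((z - τ j)/2)) := by ring
    rcases neg_one_pow_or i with h | h <;> rw [h] at hfz hgz <;> nlinarith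
  -- continuity and periodicity of g
  have hgcont : Continuous g := by
    apply continuous_finset_prod
    intro j _
    exact Real.continuous_sin.comp ((continuous_id.sub continuous_const).div_const 2)
  have hgper : Function.Periodic g (2*Real.pi) := by
    intro z
    simp only [hgdef]
    have hc : ∀ j ∈ Finset.range m, Real.sin ((z + 2*Real.pi - τ j)/2) =
        -(Real.sin ((z - τ j)/2)) := by
      intro j _
      rw [show (z + 2*Real.pi - τ j)/2 = (z - τ j)/2 + Real.pi by ring, Real.sin_add_pi]
    rw [Finset.prod_congr rfl hc, prod_neg_eq, Finset.card_range,
      Even.neg_one_pow hmeven, one_mul]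
  -- f * g is positive at a
  have hga : 0 < f a * g a := by
    have hne0 : g a ≠ 0 := by
      simp only [hgdef]
      rw [Finset.prod_ne_zero_iff]
      intro j hj
      rw [Finset.mem_range] at hj
      have h1 : a < τ j := by
        have := (hτin j hj).1
        have h2 := (hxI j (by omega)).1
        linarith
      have h2 : τ j < a + 2*Real.pi := by
        have := (hτin j hj).2
        have h3 := (hxI (j+1) (by omega)).2
        linarith
      have : Real.sin ((a - τ j)/2) < 0 :=
        Real.sin_neg_of_neg_of_neg_pi_lt (by linarith) (by linarith)
      exact this.ne
    have h1 := hFG a ⟨le_rfl, by linarith⟩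
    rcases eq_or_lt_of_le h1 with heq | h
    · exact absurd heq.symm (mul_ne_zero (ne_of_gt ha) hne0)
    · exact h
  -- the contradiction via the integral
  have hint_pos : 0 < ∫ z in a..(a + 2*Real.pi), f z * g z :=
    integral_pos_helper (by linarith) (hf.mul hgcont) hFG ⟨le_rfl, by linarith⟩ hga
  have hper_fg : Function.Periodic (fun z => f z * g z) (2*Real.pi) := hper.mul hgper
  have hshift : ∫ z in a..(a + 2*Real.pi), f z * g z
      = ∫ z in (0:ℝ)..(0 + 2*Real.pi), f z * g z :=
    hper_fg.intervalIntegral_add_eq a 0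
  have hgmem : g ∈ T n := by
    obtain ⟨p, hp⟩ := hmeven
    have hmem := prod_pairs_mem_T p τ
    have e2 : 2 * p = m := by omega
    rw [e2] at hmem
    exact T_mono (by omega) hmem
  have hzero := (ortho hf hI0 hcos hsin hgmem).2
  rw [hshift, zero_add] at hint_pos
  simp only [hgdef] at hzero hint_pos
  rw [hzero] at hint_pos
  exact lt_irrefl 0 hint_pos

lemma chain_prod {f : ℝ → ℝ} {y : ℕ → ℝ} {m : ℕ} (hm : 0 < m)
    (hc : ∀ i, i < m → f (y i) * f (y (i+1)) < 0) :
    ∀ i, i ≤ m → 0 < (f (y 0) * f (y i)) * (-1:ℝ)^i := by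
  rcases lt_trichotomy (f (y 0)) 0 with h | h | h
  · have hs := sign_chain (f := fun z => -f z) (x := y) (m := m)
      (by simpa using neg_pos.mpr h)
      (fun i hi => by simpa [neg_mul_neg] using hc i hi)
    intro i hi
    have h1 : 0 < (-1:ℝ)^i * -f (y i) := hs i hi
    have h2 := neg_pos.mpr h
    nlinarith [mul_pos h2 h1]
  · exfalso
    have := hc 0 hm
    rw [h, zero_mul] at this
    exact lt_irrefl 0 this
  · have hs := sign_chain (f := f) (x := y) (m := m) h (fun i hi => hc i hi)
    intro i hi
    nlinarith [mul_pos h (hs i hi)]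

set_option maxHeartbeats 1000000 in
lemma rotate (n : ℕ) {f : ℝ → ℝ} (hper : Function.Periodic f (2 * Real.pi))
    (c ℓ : ℝ) (hℓ : 2 * Real.pi < ℓ) {a : ℝ} (y : ℕ → ℝ)
    (hchain : ∀ i, i < 2*n+1 → y i < y (i+1) ∧ f (y i) * f (y (i+1)) < 0)
    (hmem : ∀ i, i ≤ 2*n+1 → y i ∈ Set.Ico a (a + 2*Real.pi)) :
    ∃ x : Fin (2*n+2) → ℝ, StrictMono x ∧ (∀ i, x i ∈ Set.Ioo c (c + ℓ)) ∧
      ∀ i : Fin (2*n+1), f (x i.castSucc) * f (x i.succ) < 0 := by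
  classical
  have hπ : (0:ℝ) < 2 * Real.pi := by positivity
  set N := 2*n+1 with hN
  have ymono := chain_mono (m := N) (fun i hi => (hchain i hi).1)
  set K : ℕ → ℤ := fun i => ⌈(y i - (c + 2*Real.pi)) / (2*Real.pi)⌉ with hK
  set r : ℕ → ℝ := fun i => y i - 2*Real.pi * (K i) with hr
  have hdiv : ∀ w : ℝ, 2*Real.pi * (w / (2*Real.pi)) = w := by
    intro w; field_simp
  have hrmem : ∀ i, c < r i ∧ r i ≤ c + 2*Real.pi := by
    intro i
    have h1 := Int.le_ceil ((y i - (c + 2*Real.pi)) / (2*Real.pi))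
    have h2 := Int.ceil_lt_add_one ((y i - (c + 2*Real.pi)) / (2*Real.pi))
    have h3 := mul_lt_mul_of_pos_left h2 hπ
    have h4 := mul_le_mul_of_nonneg_left h1 hπ.le
    rw [mul_add, hdiv, mul_one] at h3
    rw [hdiv] at h4
    constructor
    · simp only [hr]; linarith
    · simp only [hr]; linarith
  have hfr : ∀ i, f (r i) = f (y i) := by
    intro i
    have h1 : f (y i - (K i : ℝ) * (2*Real.pi)) = f (y i) := hper.sub_int_mul_eq (K i)
    rw [show r i = y i - (K i:ℝ) * (2*Real.pi) from by simp only [hr]; ring]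
    exact h1
  have Kmono : ∀ i j, i ≤ j → j ≤ N → K i ≤ K j := by
    intro i j hij hjN
    simp only [hK]
    apply Int.ceil_mono
    have := ymono i j hij hjN
    gcongr
  have Kgap : K N ≤ K 0 + 1 := by
    have h0m := hmem 0 (by omega)
    have hNm := hmem N le_rfl
    have hy : y N ≤ y 0 + 2*Real.pi := by
      have := h0m.1; have := hNm.2; linarith
    have heq : ((y 0 + 2*Real.pi) - (c + 2*Real.pi))/(2*Real.pi)
        = (y 0 - (c + 2*Real.pi))/(2*Real.pi) + 1 := by
      field_simp
      ring
    have h1 : K N ≤ ⌈((y 0 + 2*Real.pi) - (c + 2*Real.pi))/(2*Real.pi)⌉ := by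
      simp only [hK]
      apply Int.ceil_mono
      gcongr
    rw [heq, Int.ceil_add_one] at h1
    exact h1
  have hex : ∃ j, K j = K N := ⟨N, rfl⟩
  set j₀ := Nat.find hex with hj₀def
  have hj₀ : K j₀ = K N := Nat.find_spec hex
  have hj₀le : j₀ ≤ N := Nat.find_min' hex rfl
  have hjmin : ∀ t, t < j₀ → ¬ K t = K N := fun t ht => Nat.find_min hex ht
  have hKhigh : ∀ t, j₀ ≤ t → t ≤ N → K t = K N := fun t h1 h2 =>
    le_antisymm (Kmono t N h2 le_rfl) (by rw [← hj₀]; exact Kmono j₀ t h1 h2)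
  have hKlow : ∀ t, t < j₀ → K t = K 0 := by
    intro t ht
    have h1 := Kmono 0 t (Nat.zero_le _) (by omega)
    have h2 := Kmono t N (by omega) le_rfl
    have h3 := hjmin t ht
    omega
  have hseam : 0 < j₀ → K N = K 0 + 1 := by
    intro h
    have h1 := hjmin 0 h
    have h2 := Kmono 0 N (Nat.zero_le _) le_rfl
    omega
  set idx : ℕ → ℕ := fun i => if i + j₀ ≤ N then i + j₀ else i + j₀ - (N+1) with hidx
  set xr : ℕ → ℝ := fun i => r (idx i) with hxr
  have hxmem : ∀ i, c < xr i ∧ xr i < c + ℓ := fun i =>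
    ⟨(hrmem _).1, lt_of_le_of_lt (hrmem _).2 (by linarith)⟩
  have hstep : ∀ s, s < N → K s = K (s+1) → r s < r (s+1) := by
    intro s hs hKs
    simp only [hr]
    have := (hchain s hs).1
    rw [← hKs]
    linarith
  have hcons : ∀ i, i < N → xr i < xr (i+1) ∧ f (xr i) * f (xr (i+1)) < 0 := by
    intro i hi
    by_cases hc1 : i + 1 + j₀ ≤ N
    · have e1 : idx i = i + j₀ := by
        simp only [hidx]; rw [if_pos (by omega)]
      have e2 : idx (i+1) = i + 1 + j₀ := by
        simp only [hidx]; rw [if_pos hc1]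
      have e3 : i + j₀ + 1 = i + 1 + j₀ := by omega
      have hKe : K (i + j₀) = K (i + j₀ + 1) := by
        rw [hKhigh (i + j₀) (by omega) (by omega), hKhigh (i + j₀ + 1) (by omega) (by omega)]
      constructor
      · simp only [hxr]
        rw [e1, e2, ← e3]
        exact hstep (i + j₀) (by omega) hKe
      · simp only [hxr]
        rw [e1, e2, hfr, hfr, ← e3]
        exact (hchain (i + j₀) (by omega)).2
    · by_cases hc2 : i + j₀ ≤ N
      · have hiN : i + j₀ = N := by omega
        have hj₀pos : 0 < j₀ := by omega
        have e1 : idx i = N := by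
          simp only [hidx]; rw [if_pos hc2]; omega
        have e2 : idx (i+1) = 0 := by
          simp only [hidx]; rw [if_neg (by omega)]; omega
        have hs := hseam hj₀pos
        constructor
        · simp only [hxr]
          rw [e1, e2]
          simp only [hr]
          rw [hs]
          push_cast
          have h1 := (hmem 0 (by omega)).1
          have h2 := (hmem N le_rfl).2
          linarith
        · simp only [hxr]
          rw [e1, e2, hfr, hfr]
          have hcp := chain_prod (f := f) (y := y) (m := N) (by omega)
            (fun i hi => (hchain i hi).2) N le_rfl
          have hodd : Odd N := ⟨n, by omega⟩
          rw [Odd.neg_one_pow hodd] at hcp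
          nlinarith
      · have e1 : idx i = i + j₀ - (N+1) := by
          simp only [hidx]; rw [if_neg hc2]
        have e2 : idx (i+1) = i + j₀ - (N+1) + 1 := by
          simp only [hidx]; rw [if_neg (by omega)]; omega
        have hu1 : i + j₀ - (N+1) + 1 < j₀ := by omega
        have hKe : K (i + j₀ - (N+1)) = K (i + j₀ - (N+1) + 1) := by
          rw [hKlow _ (by omega), hKlow _ hu1]
        constructor
        · simp only [hxr]
          rw [e1, e2]
          exact hstep _ (by omega) hKe
        · simp only [hxr]
          rw [e1, e2, hfr, hfr]
          exact (hchain _ (by omega)).2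
  refine ⟨fun i => xr i.val, ?_, ?_, ?_⟩
  · rw [Fin.strictMono_iff_lt_succ]
    intro i
    simp only [Fin.coe_castSucc, Fin.val_succ]
    exact (hcons i.val i.isLt).1
  · intro i
    exact ⟨(hxmem i.val).1, (hxmem i.val).2⟩
  · intro i
    simp only [Fin.coe_castSucc, Fin.val_succ]
    exact (hcons i.val i.isLt).2

end Hurwitz

/-- Hurwitz's theorem: if the first `n` harmonics (the `2n+1` first Fourier
coefficients) of a continuous `2π`-periodic function `f`, not identically zero,
vanish, then on every interval of length greater than `2π` the function `f`
changes sign at least `2n+1` times. -/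
theorem hurwitz_sign_changes
    (n : ℕ) (hn : 1 ≤ n) (f : ℝ → ℝ) (hf : Continuous f)
    (hper : Function.Periodic f (2 * Real.pi))
    (hne : ∃ x, f x ≠ 0)
    (h0 : ∫ x in (0:ℝ)..(2 * Real.pi), f x = 0)
    (hcos : ∀ k : ℕ, 1 ≤ k → k ≤ n →
      (∫ x in (0:ℝ)..(2 * Real.pi), f x * Real.cos (k * x)) = 0)
    (hsin : ∀ k : ℕ, 1 ≤ k → k ≤ n →
      (∫ x in (0:ℝ)..(2 * Real.pi), f x * Real.sin (k * x)) = 0) :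
    ∀ c ℓ : ℝ, 2 * Real.pi < ℓ →
      ∃ x : Fin (2 * n + 2) → ℝ, StrictMono x ∧ (∀ i, x i ∈ Set.Ioo c (c + ℓ)) ∧
        ∀ i : Fin (2 * n + 1), f (x i.castSucc) * f (x i.succ) < 0 := by
  intro c ℓ hℓ
  obtain ⟨x₀, hx₀⟩ := hne
  rcases lt_or_gt_of_ne hx₀ with hneg | hpos
  · -- f x₀ < 0 : apply everything to -f
    have hpern : Function.Periodic (fun z => -f z) (2 * Real.pi) := fun z => by
      simp [hper z]
    have hcore := Hurwitz.core n (f := fun z => -f z) hf.neg hpern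
      (by rw [intervalIntegral.integral_neg, h0, neg_zero])
      (fun k h1 h2 => by
        simp only [neg_mul]
        rw [intervalIntegral.integral_neg, hcos k h1 h2, neg_zero])
      (fun k h1 h2 => by
        simp only [neg_mul]
        rw [intervalIntegral.integral_neg, hsin k h1 h2, neg_zero])
      (a := x₀) (by simpa using hneg)
    obtain ⟨y, hchain, hmemy⟩ := hcore
    obtain ⟨x, h1, h2, h3⟩ := Hurwitz.rotate n (f := fun z => -f z) hpern
      c ℓ hℓ y hchain hmemy
    refine ⟨x, h1, h2, fun i => ?_⟩
    have := h3 i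
    simpa [neg_mul_neg] using this
  · have hcore := Hurwitz.core n (f := f) hf hper h0 hcos hsin (a := x₀) hpos
    obtain ⟨y, hchain, hmemy⟩ := hcore
    exact Hurwitz.rotate n (f := f) hper c ℓ hℓ y hchain hmemy
end
end

section
/- Let f₁, …, f_n be a Chebyshev system of order n on a compact interval [a,b], let ρ : [a,b] → ℝ be continuous with ρ ≥ 0, and let f : [a,b] → ℝ be continuous with f·ρ not identically zero. If ∫_a^b f(x)·f_j(x)·ρ(x) dx = 0 for every j = 1, …, n, then f changes sign at least n times in [a,b]. -/
open Set Filter Topology intervalIntegral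

lemma cheb_finset_card_le {n : ℕ} {a b : ℝ} {F : Fin n → ℝ → ℝ}
    (hcheb : ∀ c : Fin n → ℝ, c ≠ 0 →
      {x ∈ Set.Icc a b | ∑ j, c j * F j x = 0}.encard ≤ (n - 1 : ℕ))
    {c : Fin n → ℝ} (hc : c ≠ 0) {S : Finset ℝ} (hS : ↑S ⊆ Set.Icc a b)
    (hz : ∀ p ∈ S, ∑ j, c j * F j p = 0) : S.card ≤ n - 1 := by
  have h1 : (↑S : Set ℝ) ⊆ {x ∈ Set.Icc a b | ∑ j, c j * F j x = 0} :=
    fun p hp => ⟨hS hp, hz p hp⟩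
  have h2 := (Set.encard_mono h1).trans (hcheb c hc)
  rw [Set.encard_coe_eq_coe_finsetCard] at h2
  exact_mod_cast h2

lemma exists_annihilator {n : ℕ} (F : Fin n → ℝ → ℝ) (S : Finset ℝ) (hcard : S.card < n) :
    ∃ c : Fin n → ℝ, c ≠ 0 ∧ ∀ p ∈ S, ∑ j, c j * F j p = 0 := by
  classical
  set L : (Fin n → ℝ) →ₗ[ℝ] (S → ℝ) :=
    LinearMap.pi (fun p => ∑ j, F j p.1 • LinearMap.proj j) with hL
  have hker : LinearMap.ker L ≠ ⊥ := by
    intro h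
    have hinj : Function.Injective L := LinearMap.ker_eq_bot.mp h
    have := LinearMap.finrank_le_finrank_of_injective hinj
    simp [Module.finrank_pi] at this
    omega
  obtain ⟨c, hcmem, hc0⟩ := (Submodule.ne_bot_iff _).mp hker
  refine ⟨c, hc0, fun p hp => ?_⟩
  have := congrFun (LinearMap.mem_ker.mp hcmem) ⟨p, hp⟩
  simp [hL, mul_comm] at this
  simpa [mul_comm] using this

-- K1 : alternating combination with sign changes exactly at the n-1 points of P
lemma exists_alternating {n : ℕ} {a b : ℝ} (hab : a < b) (hn : 1 ≤ n)
    (F : Fin n → ℝ → ℝ) (hF : ∀ j, ContinuousOn (F j) (Set.Icc a b))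
    (hcheb : ∀ c : Fin n → ℝ, c ≠ 0 →
      {x ∈ Set.Icc a b | ∑ j, c j * F j x = 0}.encard ≤ (n - 1 : ℕ))
    (P : Finset ℝ) (hP : ↑P ⊆ Set.Icc a b) (hPcard : P.card = n - 1) :
    ∃ c : Fin n → ℝ, c ≠ 0 ∧ (∀ p ∈ P, ∑ j, c j * F j p = 0) ∧ ∀ x ∈ Set.Icc a b,
      0 ≤ (-1 : ℝ) ^ ((P.filter (· < x)).card) * ∑ j, c j * F j x := by
  classical
  obtain ⟨c, hc0, hcz⟩ := exists_annihilator F P (by omega)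
  set g : ℝ → ℝ := fun x => ∑ j, c j * F j x with hgdef
  have hgc : ContinuousOn g (Set.Icc a b) := by
    apply continuousOn_finset_sum
    intro j _
    exact (hF j).const_smul (c j) |>.congr (fun x _ => by simp [smul_eq_mul])
  -- zero set of any nonzero combination is exactly P when it contains P
  have hgne : ∀ x ∈ Set.Icc a b, x ∉ P → g x ≠ 0 := by
    intro x hx hxP hgx
    have hcard := cheb_finset_card_le hcheb hc0 (S := insert x P)
      (by intro y hy; simp at hy; rcases hy with rfl | hy; exacts [hx, hP hy])
      (by intro p hp; simp at hp; rcases hp with rfl | hp; exacts [hgx, hcz p hp])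
    rw [Finset.card_insert_of_notMem hxP, hPcard] at hcard
    omega
  -- no sign change without a P point in between
  have hsame : ∀ x ∈ Set.Icc a b, ∀ y ∈ Set.Icc a b, x ≤ y → x ∉ P → y ∉ P →
      (∀ q ∈ P, ¬ q ∈ Set.Ioo x y) → 0 < g x * g y := by
    intro x hx y hy hxy hxP hyP hPxy
    have hgx := hgne x hx hxP
    have hgy := hgne y hy hyP
    rcases lt_or_gt_of_ne hgx with h1 | h1 <;> rcases lt_or_gt_of_ne hgy with h2 | h2
    · nlinarith
    · exfalso
      have hcont : ContinuousOn g (Set.Icc x y) :=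
        hgc.mono (Set.Icc_subset_Icc hx.1 hy.2)
      obtain ⟨z, hz1, hz2⟩ := intermediate_value_Ioo hxy hcont
        (show (0:ℝ) ∈ Set.Ioo (g x) (g y) from ⟨h1, h2⟩)
      have hzIcc : z ∈ Set.Icc a b := ⟨hx.1.trans hz1.1.le, hz1.2.le.trans hy.2⟩
      rcases Classical.em (z ∈ P) with hzP | hzP
      · exact hPxy z hzP hz1
      · exact hgne z hzIcc hzP hz2
    · exfalso
      have hcont : ContinuousOn g (Set.Icc x y) :=
        hgc.mono (Set.Icc_subset_Icc hx.1 hy.2)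
      obtain ⟨z, hz1, hz2⟩ := intermediate_value_Ioo' hxy hcont
        (show (0:ℝ) ∈ Set.Ioo (g y) (g x) from ⟨h2, h1⟩)
      have hzIcc : z ∈ Set.Icc a b := ⟨hx.1.trans hz1.1.le, hz1.2.le.trans hy.2⟩
      rcases Classical.em (z ∈ P) with hzP | hzP
      · exact hPxy z hzP hz1
      · exact hgne z hzIcc hzP hz2
    · nlinarith
  -- sign must flip across each point of P
  have hflip : ∀ x ∈ Set.Icc a b, ∀ y ∈ Set.Icc a b, x ∉ P → y ∉ P →
      ∀ p ∈ P, p ∈ Set.Ioo x y → (∀ q ∈ P, q ∈ Set.Ioo x y → q = p) →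
      g x * g y < 0 := by
    intro x hx y hy hxP hyP p hpP hpxy hpuniq
    by_contra hcon
    have hgx := hgne x hx hxP
    have hgy := hgne y hy hyP
    have hprod : 0 < g x * g y := by
      rcases mul_ne_zero hgx hgy |>.lt_or_gt with h | h
      · exact absurd h hcon
      · exact h
    set s : ℝ := if 0 < g x then 1 else -1 with hsdef
    have hsx : 0 < s * g x := by
      rcases lt_or_gt_of_ne hgx with h | h
      · have : s = -1 := by rw [hsdef]; simp [not_lt.mpr h.le]
        rw [this]; nlinarith
      · have : s = 1 := by rw [hsdef]; simp [h]
        rw [this]; nlinarith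
    have hsy : 0 < s * g y := by nlinarith [sq_nonneg s, sq_nonneg (g x)]
    have hpIcc : p ∈ Set.Icc a b := hP hpP
    -- a fresh point outside P
    obtain ⟨x₀, hx₀Icc, hx₀P⟩ : ∃ x₀ ∈ Set.Icc a b, x₀ ∉ P := by
      have hinf : (Set.Icc a b \ ↑P).Infinite :=
        (Set.Icc_infinite hab).diff (P.finite_toSet)
      obtain ⟨x₀, hx₀⟩ := hinf.nonempty
      exact ⟨x₀, hx₀.1, hx₀.2⟩
    -- a combination vanishing on P \ {p} but not at p
    obtain ⟨d, hdz, hdp⟩ : ∃ d : Fin n → ℝ,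
        (∀ q ∈ P.erase p, ∑ j, d j * F j q = 0) ∧ ∑ j, d j * F j p ≠ 0 := by
      by_contra hd
      push_neg at hd
      have hcerase : (P.erase p).card = n - 2 := by
        rw [Finset.card_erase_of_mem hpP, hPcard]; omega
      have hn2 : 2 ≤ n := by
        have h1 : 1 ≤ P.card := Finset.card_pos.mpr ⟨p, hpP⟩
        omega
      obtain ⟨e, he0, hez⟩ := exists_annihilator F (insert x₀ (P.erase p)) (by
        have := Finset.card_insert_le x₀ (P.erase p)
        omega)
      have hep : ∑ j, e j * F j p = 0 :=
        hd e (fun q hq => hez q (Finset.mem_insert_of_mem hq))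
      have hcard := cheb_finset_card_le hcheb he0 (S := insert x₀ P)
        (by intro z hz; simp at hz; rcases hz with rfl | hz; exacts [hx₀Icc, hP hz])
        (by
          intro q hq
          rcases Finset.mem_insert.mp hq with rfl | hq
          · exact hez q (Finset.mem_insert_self _ _)
          · rcases Classical.em (q = p) with rfl | hqp
            · exact hep
            · exact hez q (Finset.mem_insert_of_mem (Finset.mem_erase.mpr ⟨hqp, hq⟩)))
      rw [Finset.card_insert_of_notMem hx₀P, hPcard] at hcard
      omega
    set h : ℝ → ℝ := fun z => ∑ j, d j * F j z with hhdef
    set v : ℝ := h p with hvdef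
    have hv : v ≠ 0 := hdp
    set A : ℝ := |h x / v| with hAdef
    set B : ℝ := |h y / v| with hBdef
    set δ : ℝ := min (s * g x / (A + 1)) (s * g y / (B + 1)) with hδdef
    have hA0 : (0:ℝ) ≤ A := abs_nonneg _
    have hB0 : (0:ℝ) ≤ B := abs_nonneg _
    have hδ0 : 0 < δ := lt_min (div_pos hsx (by linarith)) (div_pos hsy (by linarith))
    have hδA : δ * (A + 1) ≤ s * g x := by
      have h1 : δ ≤ s * g x / (A + 1) := min_le_left _ _
      rw [le_div_iff₀ (by linarith)] at h1
      exact h1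
    have hδB : δ * (B + 1) ≤ s * g y := by
      have h1 : δ ≤ s * g y / (B + 1) := min_le_right _ _
      rw [le_div_iff₀ (by linarith)] at h1
      exact h1
    set cδ : Fin n → ℝ := fun j => s * c j - (δ / v) * d j with hcδdef
    have hgδ : ∀ z, ∑ j, cδ j * F j z = s * g z - (δ / v) * h z := by
      intro z
      rw [hgdef, hhdef]
      simp only [hcδdef]
      rw [Finset.mul_sum, Finset.mul_sum, ← Finset.sum_sub_distrib]
      exact Finset.sum_congr rfl (fun j _ => by ring)
    have hgp : g p = 0 := hcz p hpP
    have hgδp : ∑ j, cδ j * F j p = -δ := by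
      rw [hgδ, hgp, ← hvdef, div_mul_cancel₀ _ hv]; ring
    have hgδx : 0 < ∑ j, cδ j * F j x := by
      rw [hgδ]
      have h1 : (δ / v) * h x = δ * (h x / v) := by ring
      have h2 : δ * (h x / v) ≤ δ * A := by
        apply mul_le_mul_of_nonneg_left (le_abs_self _) hδ0.le
      nlinarith
    have hgδy : 0 < ∑ j, cδ j * F j y := by
      rw [hgδ]
      have h1 : (δ / v) * h y = δ * (h y / v) := by ring
      have h2 : δ * (h y / v) ≤ δ * B := by
        apply mul_le_mul_of_nonneg_left (le_abs_self _) hδ0.le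
      nlinarith
    have hcδ0 : cδ ≠ 0 := by
      intro hc
      rw [hc] at hgδp
      simp at hgδp
      linarith
    have hgδc : ContinuousOn (fun z => ∑ j, cδ j * F j z) (Set.Icc a b) := by
      apply continuousOn_finset_sum
      intro j _
      exact (hF j).const_smul (cδ j) |>.congr (fun z _ => by simp [smul_eq_mul])
    obtain ⟨z₁, hz₁m, hz₁⟩ := intermediate_value_Ioo' hpxy.1.le
      (hgδc.mono (Set.Icc_subset_Icc hx.1 hpIcc.2))
      (show (0:ℝ) ∈ Set.Ioo (∑ j, cδ j * F j p) (∑ j, cδ j * F j x) from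
        ⟨by rw [hgδp]; linarith, hgδx⟩)
    obtain ⟨z₂, hz₂m, hz₂⟩ := intermediate_value_Ioo hpxy.2.le
      (hgδc.mono (Set.Icc_subset_Icc hpIcc.1 hy.2))
      (show (0:ℝ) ∈ Set.Ioo (∑ j, cδ j * F j p) (∑ j, cδ j * F j y) from
        ⟨by rw [hgδp]; linarith, hgδy⟩)
    have hz₁Icc : z₁ ∈ Set.Icc a b := ⟨hx.1.trans hz₁m.1.le, hz₁m.2.le.trans hpIcc.2⟩
    have hz₂Icc : z₂ ∈ Set.Icc a b := ⟨hpIcc.1.trans hz₂m.1.le, hz₂m.2.le.trans hy.2⟩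
    have hz₁P : z₁ ∉ P := by
      intro hmem
      have : z₁ = p := hpuniq z₁ hmem ⟨hz₁m.1, hz₁m.2.trans hpxy.2⟩
      exact absurd this hz₁m.2.ne
    have hz₂P : z₂ ∉ P := by
      intro hmem
      have : z₂ = p := hpuniq z₂ hmem ⟨hpxy.1.trans hz₂m.1, hz₂m.2⟩
      exact absurd this hz₂m.1.ne'
    have hcard := cheb_finset_card_le hcheb hcδ0
      (S := insert z₁ (insert z₂ (P.erase p)))
      (by
        intro q hq
        simp at hq
        rcases hq with rfl | rfl | hq
        · exact hz₁Icc
        · exact hz₂Icc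
        · exact hP hq.1)
      (by
        intro q hq
        rcases Finset.mem_insert.mp hq with rfl | hq
        · exact hz₁
        rcases Finset.mem_insert.mp hq with rfl | hq
        · exact hz₂
        · have hqP := (Finset.mem_erase.mp hq).2
          have hqp := (Finset.mem_erase.mp hq).1
          rw [hgδ, show g q = 0 from hcz q hqP, show h q = 0 from hdz q hq]
          ring)
    have hz₁z₂ : z₁ ≠ z₂ := (hz₁m.2.trans hz₂m.1).ne
    have hz₁e : z₁ ∉ insert z₂ (P.erase p) := by
      simp only [Finset.mem_insert]
      push_neg
      exact ⟨hz₁z₂, fun h => hz₁P (Finset.mem_of_mem_erase h)⟩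
    have hz₂e : z₂ ∉ P.erase p := fun h => hz₂P (Finset.mem_of_mem_erase h)
    rw [Finset.card_insert_of_notMem hz₁e, Finset.card_insert_of_notMem hz₂e,
      Finset.card_erase_of_mem hpP, hPcard] at hcard
    omega
  -- pairwise alternation, by induction on the number of P points in between
  have hpair : ∀ k : ℕ, ∀ x ∈ Set.Icc a b, ∀ y ∈ Set.Icc a b, x ≤ y → x ∉ P → y ∉ P →
      (P.filter (· < y)).card = (P.filter (· < x)).card + k →
      0 < (-1:ℝ) ^ ((P.filter (· < x)).card + (P.filter (· < y)).card) * (g x * g y) := by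
    intro k
    induction k with
    | zero =>
      intro x hx y hy hxy hxP hyP hN
      have hE : (-1:ℝ) ^ ((P.filter (· < x)).card + (P.filter (· < y)).card) = 1 := by
        rw [hN]
        exact Even.neg_one_pow ⟨(P.filter (· < x)).card, by ring⟩
      rw [hE, one_mul]
      apply hsame x hx y hy hxy hxP hyP
      intro q hq hqIoo
      have hss : P.filter (· < x) ⊂ P.filter (· < y) := by
        constructor
        · intro q' hq'
          have h1 := Finset.mem_filter.mp hq'
          exact Finset.mem_filter.mpr ⟨h1.1, lt_of_lt_of_le h1.2 hxy⟩
        · intro hsub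
          have hq1 : q ∈ P.filter (· < y) := Finset.mem_filter.mpr ⟨hq, hqIoo.2⟩
          have hq2 := hsub hq1
          have := (Finset.mem_filter.mp hq2).2
          exact absurd this (not_lt.mpr hqIoo.1.le)
      have := Finset.card_lt_card hss
      omega
    | succ k ih =>
      intro x hx y hy hxy hxP hyP hN
      -- the first P point after x
      have hQne : (P.filter (fun q => x < q ∧ q < y)).Nonempty := by
        by_contra hQ
        rw [Finset.not_nonempty_iff_eq_empty] at hQ
        have hsub : P.filter (· < y) ⊆ P.filter (· < x) := by
          intro q hq
          have hq1 := Finset.mem_filter.mp hq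
          rcases lt_or_ge q x with h | h
          · exact Finset.mem_filter.mpr ⟨hq1.1, h⟩
          · exfalso
            have hqx : x < q := lt_of_le_of_ne h (fun h' => hxP (h' ▸ hq1.1))
            have : q ∈ P.filter (fun q => x < q ∧ q < y) :=
              Finset.mem_filter.mpr ⟨hq1.1, hqx, hq1.2⟩
            rw [hQ] at this
            exact absurd this (Finset.notMem_empty q)
        have := Finset.card_le_card hsub
        omega
      set p : ℝ := (P.filter (fun q => x < q ∧ q < y)).min' hQne with hpdef
      have hpmem := (P.filter (fun q => x < q ∧ q < y)).min'_mem hQne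
      have hpP : p ∈ P := (Finset.mem_filter.mp hpmem).1
      have hpx : x < p := (Finset.mem_filter.mp hpmem).2.1
      have hpy : p < y := (Finset.mem_filter.mp hpmem).2.2
      have hpmin : ∀ q ∈ P, x < q → q < y → p ≤ q := by
        intro q hq h1 h2
        exact Finset.min'_le _ q (Finset.mem_filter.mpr ⟨hq, h1, h2⟩)
      -- the next point p2 after p (or y)
      obtain ⟨p2, hp2gt, hp2le, hp2min⟩ : ∃ p2, p < p2 ∧ p2 ≤ y ∧
          ∀ q ∈ P, p < q → q < y → p2 ≤ q := by
        by_cases hR : (P.filter (fun q => p < q ∧ q < y)).Nonempty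
        · refine ⟨(P.filter (fun q => p < q ∧ q < y)).min' hR, ?_, ?_, ?_⟩
          · exact ((Finset.mem_filter.mp (Finset.min'_mem _ hR)).2).1
          · exact ((Finset.mem_filter.mp (Finset.min'_mem _ hR)).2).2.le
          · intro q hq h1 h2
            exact Finset.min'_le _ q (Finset.mem_filter.mpr ⟨hq, h1, h2⟩)
        · refine ⟨y, hpy, le_refl y, ?_⟩
          intro q hq h1 h2
          exfalso
          rw [Finset.not_nonempty_iff_eq_empty] at hR
          have hqmem : q ∈ P.filter (fun q => p < q ∧ q < y) := Finset.mem_filter.mpr ⟨hq, h1, h2⟩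
          rw [hR] at hqmem
          exact Finset.notMem_empty q hqmem
      set z : ℝ := (p + p2) / 2 with hzdef
      have hzp : p < z := by rw [hzdef]; linarith
      have hzp2 : z < p2 := by rw [hzdef]; linarith
      have hzy : z < y := lt_of_lt_of_le hzp2 hp2le
      have hxz : x < z := hpx.trans hzp
      have hzIcc : z ∈ Set.Icc a b := ⟨hx.1.trans hxz.le, hzy.le.trans hy.2⟩
      have hzP : z ∉ P := by
        intro hmem
        exact absurd (hp2min z hmem hzp hzy) (not_le.mpr hzp2)
      have hfz : P.filter (· < z) = insert p (P.filter (· < x)) := by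
        ext q
        simp only [Finset.mem_filter, Finset.mem_insert]
        constructor
        · rintro ⟨hq, hqz⟩
          rcases lt_or_ge q x with h | h
          · exact Or.inr ⟨hq, h⟩
          · left
            have hqx : x < q := lt_of_le_of_ne h (fun h' => hxP (h' ▸ hq))
            have h1 : p ≤ q := hpmin q hq hqx (hqz.trans hzy)
            rcases eq_or_lt_of_le h1 with h2 | h2
            · exact h2.symm
            · exact absurd (hp2min q hq h2 (hqz.trans hzy)) (not_le.mpr (hqz.trans hzp2))
        · rintro (rfl | ⟨hq, hqx⟩)
          · exact ⟨hpP, hzp⟩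
          · exact ⟨hq, hqx.trans hxz⟩
      have hpnotx : p ∉ P.filter (· < x) := by
        simp only [Finset.mem_filter]
        exact fun h => absurd h.2 (not_lt.mpr hpx.le)
      have hNz : (P.filter (· < z)).card = (P.filter (· < x)).card + 1 := by
        rw [hfz, Finset.card_insert_of_notMem hpnotx]
      have hA : g x * g z < 0 := by
        apply hflip x hx z hzIcc hxP hzP p hpP ⟨hpx, hzp⟩
        intro q hq hqIoo
        have : q ∈ P.filter (· < z) := Finset.mem_filter.mpr ⟨hq, hqIoo.2⟩
        rw [hfz] at this
        rcases Finset.mem_insert.mp this with h | h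
        · exact h
        · exact absurd (Finset.mem_filter.mp h).2 (not_lt.mpr hqIoo.1.le)
      have hB := ih z hzIcc y hy hzy.le hzP hyP (by omega)
      have hgz : g z ≠ 0 := hgne z hzIcc hzP
      set E : ℝ := (-1:ℝ) ^ ((P.filter (· < x)).card + (P.filter (· < y)).card) with hEdef
      have hEE : E * E = 1 := by
        rw [hEdef, ← pow_add]
        exact Even.neg_one_pow ⟨(P.filter (· < x)).card + (P.filter (· < y)).card, by ring⟩
      have hB' : E * (g z * g y) < 0 := by
        have hpow : (-1:ℝ) ^ ((P.filter (· < z)).card + (P.filter (· < y)).card) = -E := by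
          rw [hNz, hEdef, show (P.filter (· < x)).card + 1 + (P.filter (· < y)).card
            = ((P.filter (· < x)).card + (P.filter (· < y)).card) + 1 from by omega, pow_succ]
          ring
        rw [hpow] at hB
        linarith
      have h3 : 0 < (E * (g x * g y)) * (g z * g z) := by
        nlinarith [mul_pos_of_neg_of_neg hB' hA]
      have h4 : 0 < g z * g z := mul_self_pos.mpr hgz
      by_contra hle
      push_neg at hle
      nlinarith
  -- anchor the global sign
  obtain ⟨w, hwIcc, hwP⟩ : ∃ w ∈ Set.Icc a b, w ∉ P := by
    have hinf : (Set.Icc a b \ ↑P).Infinite :=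
      (Set.Icc_infinite hab).diff (P.finite_toSet)
    obtain ⟨w, hw⟩ := hinf.nonempty
    exact ⟨w, hw.1, hw.2⟩
  have hgw : g w ≠ 0 := hgne w hwIcc hwP
  have key : ∀ x ∈ Set.Icc a b, x ∉ P →
      0 < ((-1:ℝ) ^ ((P.filter (· < x)).card) * g x) *
          ((-1:ℝ) ^ ((P.filter (· < w)).card) * g w) := by
    intro x hx hxP
    have hmono : ∀ u v : ℝ, u ≤ v → (P.filter (· < u)).card ≤ (P.filter (· < v)).card := by
      intro u v huv
      apply Finset.card_le_card
      intro q hq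
      have := Finset.mem_filter.mp hq
      exact Finset.mem_filter.mpr ⟨this.1, lt_of_lt_of_le this.2 huv⟩
    rcases le_total x w with h | h
    · have := hpair ((P.filter (· < w)).card - (P.filter (· < x)).card) x hx w hwIcc h hxP hwP
        (by have := hmono x w h; omega)
      rw [pow_add] at this
      nlinarith
    · have := hpair ((P.filter (· < x)).card - (P.filter (· < w)).card) w hwIcc x hx h hwP hxP
        (by have := hmono w x h; omega)
      rw [pow_add] at this
      nlinarith
  rcases lt_or_gt_of_ne (show ((-1:ℝ) ^ ((P.filter (· < w)).card) * g w) ≠ 0 from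
      mul_ne_zero (pow_ne_zero _ (by norm_num)) hgw) with hEw | hEw
  · refine ⟨fun j => -c j, ?_, ?_, ?_⟩
    · intro h
      apply hc0
      funext j
      have := congrFun h j
      simpa using this
    · intro p hp
      rw [show ∑ j, -c j * F j p = -∑ j, c j * F j p from by
        rw [← Finset.sum_neg_distrib]; exact Finset.sum_congr rfl (fun j _ => by ring)]
      rw [hcz p hp]; ring
    · intro x hx
      have hsum : ∑ j, (fun j => -c j) j * F j x = -g x := by
        rw [hgdef, ← Finset.sum_neg_distrib]
        exact Finset.sum_congr rfl (fun j _ => by ring)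
      rw [hsum]
      rcases Classical.em (x ∈ P) with hxP | hxP
      · rw [show g x = 0 from hcz x hxP]
        simp
      · have hk := key x hx hxP
        have hrw : (-1:ℝ) ^ ((P.filter (· < x)).card) * -g x
            = -((-1:ℝ) ^ ((P.filter (· < x)).card) * g x) := by ring
        rw [hrw]
        rcases mul_pos_iff.mp hk with ⟨h1, h2⟩ | ⟨h1, h2⟩
        · exact absurd h2 (not_lt.mpr hEw.le)
        · linarith
  · refine ⟨c, hc0, hcz, ?_⟩
    intro x hx
    rcases Classical.em (x ∈ P) with hxP | hxP
    · rw [show (∑ j, c j * F j x) = 0 from hcz x hxP]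
      simp
    · have hk := key x hx hxP
      rcases mul_pos_iff.mp hk with ⟨h1, h2⟩ | ⟨h1, h2⟩
      · exact h1.le
      · exact absurd hEw (not_lt.mpr h2.le)

-- Krein-type lemma : combination with prescribed sign pattern at ≤ n-1 points
lemma krein {n : ℕ} {a b : ℝ} (hab : a < b) (hn : 1 ≤ n)
    (F : Fin n → ℝ → ℝ) (hF : ∀ j, ContinuousOn (F j) (Set.Icc a b))
    (hcheb : ∀ c : Fin n → ℝ, c ≠ 0 →
      {x ∈ Set.Icc a b | ∑ j, c j * F j x = 0}.encard ≤ (n - 1 : ℕ))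
    (T : Finset ℝ) (hT : ↑T ⊆ Set.Ioo a b) (hTcard : T.card ≤ n - 1) :
    ∃ c : Fin n → ℝ, c ≠ 0 ∧ ∀ x ∈ Set.Icc a b,
      0 ≤ (-1 : ℝ) ^ ((T.filter (· < x)).card) * ∑ j, c j * F j x := by
  classical
  set m : ℕ := T.card with hmdef
  set r : ℕ := n - 1 - m with hrdef
  set L : ℕ := r / 2 with hLdef
  set β : ℝ := (insert a T).max' (Finset.insert_nonempty a T) with hβdef
  have hβa : a ≤ β := Finset.le_max' _ a (Finset.mem_insert_self a T)
  have hβT : ∀ t ∈ T, t ≤ β := fun t ht => Finset.le_max' _ t (Finset.mem_insert_of_mem ht)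
  have hβb : β < b := by
    have := (insert a T).max'_mem (Finset.insert_nonempty a T)
    rw [← hβdef] at this
    rcases Finset.mem_insert.mp this with h | h
    · rw [h]; exact hab
    · exact (hT h).2
  set d : ℝ := (b - β) / (2 * L + 2) with hddef
  have hd0 : 0 < d := by
    apply div_pos (by linarith)
    positivity
  have hbβ : β + (2 * (L:ℝ) + 2) * d = b := by
    rw [hddef]
    field_simp
    ring
  set u : ℕ → ℝ := fun l => β + (2 * l + 1) * d with hudef
  have hu_gt : ∀ l : ℕ, β < u l := by
    intro l
    have h0 : (0:ℝ) ≤ l := Nat.cast_nonneg l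
    simp only [hudef]
    nlinarith
  have hu_sep : ∀ l l' : ℕ, l < l' → u l + d < u l' := by
    intro l l' hll
    have h1 : (l:ℝ) + 1 ≤ l' := by exact_mod_cast hll
    simp only [hudef]
    nlinarith
  have hu_lt : ∀ l : ℕ, l < L → u l + d < b := by
    intro l hl
    have h1 : (l:ℝ) + 1 ≤ L := by exact_mod_cast hl
    simp only [hudef]
    nlinarith
  have hεtend : Tendsto (fun k : ℕ => d / ((k:ℝ) + 2)) atTop (𝓝 0) := by
    apply Tendsto.div_atTop tendsto_const_nhds
    exact tendsto_atTop_add_const_right atTop 2 tendsto_natCast_atTop_atTop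
  -- the approximating combinations
  have hstep : ∀ k : ℕ, ∃ c : Fin n → ℝ, ‖c‖ = 1 ∧
      (∀ p, (p ∈ T ∨ (∃ l, l < L ∧ p = u l) ∨ (r % 2 = 1 ∧ p = a)) →
        ∑ j, c j * F j p = 0) ∧
      (∀ x ∈ Set.Icc a b, (r % 2 = 1 → a < x) →
        (∀ l, l < L → (u l < x ↔ u l + d / ((k:ℝ) + 2) < x)) →
        0 ≤ (-1 : ℝ) ^ ((T.filter (· < x)).card) * ∑ j, c j * F j x) := by
    intro k
    set ε : ℝ := d / ((k:ℝ) + 2) with hεdef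
    have hε0 : 0 < ε := by positivity
    have hεd : ε < d := by
      rw [hεdef]
      rw [div_lt_iff₀ (by positivity)]
      nlinarith
    set S₁ : Finset ℝ := if r % 2 = 1 then {a} else ∅ with hS₁def
    set U : Finset ℝ := (Finset.range L).image u with hUdef
    set V : Finset ℝ := (Finset.range L).image (fun l => u l + ε) with hVdef
    set Pk : Finset ℝ := S₁ ∪ T ∪ U ∪ V with hPkdef
    have hS₁mem : ∀ z ∈ S₁, z = a ∧ r % 2 = 1 := by
      intro z hz
      rw [hS₁def] at hz
      by_cases hr : r % 2 = 1
      · rw [if_pos hr] at hz; exact ⟨Finset.mem_singleton.mp hz, hr⟩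
      · rw [if_neg hr] at hz; exact absurd hz (Finset.notMem_empty z)
    have hUmem : ∀ z ∈ U, ∃ l, l < L ∧ z = u l := by
      intro z hz
      obtain ⟨l, hl, rfl⟩ := Finset.mem_image.mp hz
      exact ⟨l, Finset.mem_range.mp hl, rfl⟩
    have hVmem : ∀ z ∈ V, ∃ l, l < L ∧ z = u l + ε := by
      intro z hz
      obtain ⟨l, hl, rfl⟩ := Finset.mem_image.mp hz
      exact ⟨l, Finset.mem_range.mp hl, rfl⟩
    have hdisj1 : Disjoint S₁ T := by
      rw [Finset.disjoint_left]
      intro z hz hzT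
      rw [(hS₁mem z hz).1] at hzT
      exact absurd (hT hzT).1 (lt_irrefl a)
    have hdisj2 : Disjoint (S₁ ∪ T) U := by
      rw [Finset.disjoint_left]
      intro z hz hzU
      obtain ⟨l, hl, rfl⟩ := hUmem _ hzU
      rcases Finset.mem_union.mp hz with h | h
      · have := (hS₁mem _ h).1
        have := hu_gt l
        linarith [hβa]
      · have := hβT _ h
        have := hu_gt l
        linarith
    have hdisj3 : Disjoint (S₁ ∪ T ∪ U) V := by
      rw [Finset.disjoint_left]
      intro z hz hzV
      obtain ⟨l, hl, rfl⟩ := hVmem _ hzV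
      have hule : β < u l + ε := by have := hu_gt l; linarith
      rcases Finset.mem_union.mp hz with h | h
      · rcases Finset.mem_union.mp h with h1 | h1
        · have := (hS₁mem _ h1).1
          linarith [hβa]
        · have := hβT _ h1
          linarith
      · obtain ⟨l', hl', heq⟩ := hUmem _ h
        rcases lt_trichotomy l l' with hc | hc | hc
        · have := hu_sep l l' hc
          linarith
        · rw [hc] at heq; linarith
        · have := hu_sep l' l hc
          linarith
    have huinj : Function.Injective u := by
      intro l l' h
      by_contra hne
      rcases Nat.lt_or_ge l l' with hc | hc
      · have := hu_sep l l' hc; linarith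
      · have hc2 : l' < l := by omega
        have := hu_sep l' l hc2; linarith
    have hvinj : Function.Injective (fun l => u l + ε) := by
      intro l l' h
      simp only at h
      exact huinj (show u l = u l' by linarith)
    have hS₁card : S₁.card = r % 2 := by
      rw [hS₁def]
      by_cases hr : r % 2 = 1
      · rw [if_pos hr, hr]; simp
      · rw [if_neg hr]
        have : r % 2 = 0 := by omega
        rw [this]; simp
    have hmn : m ≤ n - 1 := hTcard
    have hPkcard : Pk.card = n - 1 := by
      rw [hPkdef, Finset.card_union_of_disjoint hdisj3,
        Finset.card_union_of_disjoint hdisj2, Finset.card_union_of_disjoint hdisj1,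
        hS₁card, hUdef, hVdef, Finset.card_image_of_injective _ huinj,
        Finset.card_image_of_injective _ hvinj, Finset.card_range]
      rw [← hmdef]
      omega
    have hPksub : ↑Pk ⊆ Set.Icc a b := by
      intro z hz
      have hz' : z ∈ Pk := hz
      rw [hPkdef] at hz'
      rcases Finset.mem_union.mp hz' with h | h
      · rcases Finset.mem_union.mp h with h1 | h1
        · rcases Finset.mem_union.mp h1 with h2 | h2
          · rw [(hS₁mem _ h2).1]; exact ⟨le_refl a, hab.le⟩
          · exact Set.Ioo_subset_Icc_self (hT h2)
        · obtain ⟨l, hl, rfl⟩ := hUmem _ h1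
          have h3 := hu_gt l
          have h4 := hu_lt l hl
          constructor <;> linarith [hβa, hd0]
      · obtain ⟨l, hl, rfl⟩ := hVmem _ h
        have h3 := hu_gt l
        have h4 := hu_lt l hl
        constructor <;> linarith [hβa, hd0, hε0, hεd]
    obtain ⟨c₀, hc₀0, hc₀z, hc₀sgn⟩ :=
      exists_alternating hab hn F hF hcheb Pk hPksub hPkcard
    have hc₀n : ‖c₀‖ ≠ 0 := norm_ne_zero_iff.mpr hc₀0
    set γ : ℝ := (-1 : ℝ) ^ (r % 2) * ‖c₀‖⁻¹ with hγdef
    have hγne : γ ≠ 0 := by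
      apply mul_ne_zero
      · exact pow_ne_zero _ (by norm_num)
      · exact inv_ne_zero hc₀n
    refine ⟨γ • c₀, ?_, ?_, ?_⟩
    · rw [norm_smul, hγdef]
      rw [norm_mul]
      simp only [norm_pow, norm_neg, norm_one, one_pow, one_mul]
      rw [norm_inv, norm_norm]
      exact inv_mul_cancel₀ hc₀n
    · intro p hp
      have hpPk : p ∈ Pk := by
        rw [hPkdef]
        rcases hp with h | ⟨l, hl, heq⟩ | ⟨hr, heq⟩
        · exact Finset.mem_union_left _ (Finset.mem_union_left _ (Finset.mem_union_right _ h))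
        · exact heq ▸ Finset.mem_union_left _ (Finset.mem_union_right _
            (Finset.mem_image.mpr ⟨l, Finset.mem_range.mpr hl, rfl⟩))
        · have haS : a ∈ S₁ := by rw [hS₁def, if_pos hr]; exact Finset.mem_singleton_self a
          exact heq ▸ Finset.mem_union_left _ (Finset.mem_union_left _
            (Finset.mem_union_left _ haS))
      have h0 := hc₀z p hpPk
      have : ∑ j, (γ • c₀) j * F j p = γ * ∑ j, c₀ j * F j p := by
        rw [Finset.mul_sum]
        exact Finset.sum_congr rfl (fun j _ => by simp [smul_eq_mul]; ring)
      rw [this, h0, mul_zero]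
    · intro x hx hax hiff
      -- compute the filtered cardinality
      have hS₁f : (S₁.filter (· < x)).card = r % 2 := by
        by_cases hr : r % 2 = 1
        · rw [hS₁def, if_pos hr, Finset.filter_singleton, if_pos (hax hr), hr]
          simp
        · have : r % 2 = 0 := by omega
          rw [hS₁def, if_neg hr, this]
          simp
      have hUf : (U.filter (· < x)).card = ((Finset.range L).filter (fun l => u l < x)).card := by
        rw [hUdef, Finset.filter_image]
        exact Finset.card_image_of_injective _ huinj
      have hVf : (V.filter (· < x)).card
          = ((Finset.range L).filter (fun l => u l < x)).card := by
        rw [hVdef, Finset.filter_image]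
        rw [Finset.card_image_of_injective _ hvinj]
        congr 1
        apply Finset.filter_congr
        intro l hl
        have h := (hiff l (Finset.mem_range.mp hl)).symm
        first
        | exact h
        | exact propext h
        | simpa using h
      set C : ℕ := ((Finset.range L).filter (fun l => u l < x)).card with hCdef
      have hNcomp : (Pk.filter (· < x)).card = r % 2 + (T.filter (· < x)).card + C + C := by
        have h3' : Disjoint (S₁.filter (· < x) ∪ T.filter (· < x) ∪ U.filter (· < x))
            (V.filter (· < x)) := by
          have := Finset.disjoint_filter_filter (p := (· < x)) (q := (· < x)) hdisj3
          rwa [Finset.filter_union, Finset.filter_union] at this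
        have h2' : Disjoint (S₁.filter (· < x) ∪ T.filter (· < x)) (U.filter (· < x)) := by
          have := Finset.disjoint_filter_filter (p := (· < x)) (q := (· < x)) hdisj2
          rwa [Finset.filter_union] at this
        have h1' : Disjoint (S₁.filter (· < x)) (T.filter (· < x)) :=
          Finset.disjoint_filter_filter hdisj1
        have e1 : Pk.filter (· < x) = ((S₁.filter (· < x) ∪ T.filter (· < x))
            ∪ U.filter (· < x)) ∪ V.filter (· < x) := by
          rw [hPkdef, Finset.filter_union, Finset.filter_union, Finset.filter_union]
        rw [e1, Finset.card_union_of_disjoint h3', Finset.card_union_of_disjoint h2',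
          Finset.card_union_of_disjoint h1', hS₁f, hUf, hVf]
      have h1 := hc₀sgn x hx
      rw [hNcomp] at h1
      have hpow : (-1 : ℝ) ^ (r % 2 + (T.filter (· < x)).card + C + C)
          = (-1 : ℝ) ^ (r % 2 + (T.filter (· < x)).card) := by
        rw [show r % 2 + (T.filter (· < x)).card + C + C
          = (r % 2 + (T.filter (· < x)).card) + 2 * C from by ring]
        rw [pow_add, pow_mul]
        norm_num
      rw [hpow] at h1
      have h2 : ∑ j, (γ • c₀) j * F j x = γ * ∑ j, c₀ j * F j x := by
        rw [Finset.mul_sum]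
        exact Finset.sum_congr rfl (fun j _ => by simp [smul_eq_mul]; ring)
      rw [h2, hγdef]
      rw [show (-1 : ℝ) ^ (T.filter (· < x)).card *
          ((-1 : ℝ) ^ (r % 2) * ‖c₀‖⁻¹ * ∑ j, c₀ j * F j x)
        = ‖c₀‖⁻¹ * ((-1 : ℝ) ^ (r % 2 + (T.filter (· < x)).card) * ∑ j, c₀ j * F j x) from by
          rw [pow_add]; ring]
      exact mul_nonneg (inv_nonneg.mpr (norm_nonneg _)) h1
  choose cs hnorm hzero hsgn using hstep
  -- extract a convergent subsequence on the unit sphere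
  obtain ⟨c, hcmem, φ, hφmono, hφtend⟩ :=
    (isCompact_sphere (0 : Fin n → ℝ) 1).tendsto_subseq
      (fun k => mem_sphere_zero_iff_norm.mpr (hnorm k))
  have hc0 : c ≠ 0 := by
    intro h
    have := mem_sphere_zero_iff_norm.mp hcmem
    rw [h] at this
    simp at this
  have heval : ∀ x : ℝ, Tendsto (fun k => ∑ j, cs (φ k) j * F j x) atTop
      (𝓝 (∑ j, c j * F j x)) := by
    intro x
    apply tendsto_finset_sum
    intro j _
    exact Tendsto.mul (((continuous_apply j).tendsto c).comp hφtend) tendsto_const_nhds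
  refine ⟨c, hc0, ?_⟩
  intro x hx
  by_cases hxz : x ∈ T ∨ (∃ l, l < L ∧ x = u l) ∨ (r % 2 = 1 ∧ x = a)
  · have hzseq : ∀ k : ℕ, ∑ j, cs (φ k) j * F j x = 0 := fun k => hzero (φ k) x hxz
    have h0 : (∑ j, c j * F j x) = 0 := by
      apply tendsto_nhds_unique (heval x)
      simp only [hzseq]
      exact tendsto_const_nhds
    rw [h0, mul_zero]
  · push_neg at hxz
    obtain ⟨hxT, hxu, hxa⟩ := hxz
    have haxx : r % 2 = 1 → a < x :=
      fun hr => lt_of_le_of_ne hx.1 (fun he => hxa hr he.symm)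
    have hev : ∀ᶠ k : ℕ in atTop, ∀ l ∈ Finset.range L,
        (u l < x ↔ u l + d / ((k:ℝ) + 2) < x) := by
      rw [Finset.eventually_all]
      intro l _
      by_cases hul : u l < x
      · have hpos : 0 < x - u l := by linarith
        filter_upwards [hεtend.eventually_lt_const hpos] with k hk
        constructor
        · intro _; linarith
        · intro _; exact hul
      · apply Eventually.of_forall
        intro k
        have hε0 : 0 < d / ((k:ℝ) + 2) := by positivity
        constructor
        · intro h; exact absurd h hul
        · intro h; exfalso
          exact hul (lt_of_lt_of_le (lt_add_of_pos_right _ hε0) h.le)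
    have hineq : ∀ᶠ k in atTop,
        0 ≤ (-1 : ℝ) ^ ((T.filter (· < x)).card) * ∑ j, cs (φ k) j * F j x := by
      filter_upwards [hφmono.tendsto_atTop.eventually hev] with k hk
      exact hsgn (φ k) x hx haxx (fun l hl => hk l (Finset.mem_range.mpr hl))
    exact ge_of_tendsto (Tendsto.const_mul _ (heval x)) hineq

/-- An alternating chain for `f` of length `k` in `[a,b]`. -/
def AltChain (a b : ℝ) (f : ℝ → ℝ) (k : ℕ) : Prop :=
  ∃ (x : ℕ → ℝ) (ε : ℝ), (ε = 1 ∨ ε = -1) ∧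
    (∀ i j, i < j → j < k → x i < x j) ∧ (∀ i < k, x i ∈ Set.Icc a b) ∧
    (∀ i < k, 0 < ε * (-1) ^ i * f (x i))

lemma altChain_mono {a b : ℝ} {f : ℝ → ℝ} {k k' : ℕ} (h : k' ≤ k)
    (hc : AltChain a b f k) : AltChain a b f k' := by
  obtain ⟨x, ε, hε, h1, h2, h3⟩ := hc
  exact ⟨x, ε, hε, fun i j hij hj => h1 i j hij (lt_of_lt_of_le hj h),
    fun i hi => h2 i (lt_of_lt_of_le hi h), fun i hi => h3 i (lt_of_lt_of_le hi h)⟩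

lemma downward_closed_eq_range {A : Finset ℕ} (h : ∀ j ∈ A, ∀ i < j, i ∈ A) :
    A = Finset.range A.card := by
  have hsub : Finset.range A.card ⊆ A := by
    intro i hi
    rw [Finset.mem_range] at hi
    by_contra hiA
    have hA_sub : A ⊆ Finset.range i := by
      intro j hj
      rw [Finset.mem_range]
      by_contra hji
      push_neg at hji
      rcases eq_or_lt_of_le hji with rfl | hlt
      · exact hiA hj
      · exact hiA (h j hj i hlt)
    have := Finset.card_le_card hA_sub
    rw [Finset.card_range] at this
    omega
  exact (Finset.eq_of_subset_of_card_le hsub (by rw [Finset.card_range])).symm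

lemma sign_structure {n : ℕ} {a b : ℝ} (hab : a < b) (hn : 1 ≤ n)
    (f : ℝ → ℝ) (hf : ContinuousOn f (Set.Icc a b))
    (x₀ : ℝ) (hx₀ : x₀ ∈ Set.Icc a b) (hfx₀ : f x₀ ≠ 0)
    (hno : ¬ AltChain a b f (n + 1)) :
    ∃ T : Finset ℝ, ↑T ⊆ Set.Ioo a b ∧ T.card ≤ n - 1 ∧ ∃ σ : ℝ, (σ = 1 ∨ σ = -1) ∧
      ∀ z ∈ Set.Icc a b, 0 ≤ σ * ((-1 : ℝ) ^ ((T.filter (· < z)).card) * f z) := by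
  classical
  have hP1 : AltChain a b f 1 := by
    rcases lt_or_gt_of_ne hfx₀ with h | h
    · exact ⟨fun _ => x₀, -1, Or.inr rfl, fun i j hij hj => by omega,
        fun i _ => hx₀, fun i hi => by interval_cases i; simpa using by linarith⟩
    · exact ⟨fun _ => x₀, 1, Or.inl rfl, fun i j hij hj => by omega,
        fun i _ => hx₀, fun i hi => by interval_cases i; simpa using by linarith⟩
  set m' : ℕ := Nat.findGreatest (AltChain a b f) (n + 1) with hm'def
  have hm'1 : 1 ≤ m' := Nat.le_findGreatest (by omega) hP1
  have hm'P : AltChain a b f m' := Nat.findGreatest_spec (P := AltChain a b f) (by omega) hP1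
  have hm'le : m' ≤ n + 1 := Nat.findGreatest_le _
  have hm'n : m' ≤ n := by
    rcases eq_or_lt_of_le hm'le with h | h
    · exact absurd (h ▸ hm'P) hno
    · omega
  have hnotP : ¬ AltChain a b f (m' + 1) := by
    intro h
    rcases eq_or_lt_of_le hm'le with he | hlt
    · exact hno (he ▸ hm'P)
    · exact Nat.findGreatest_is_greatest (P := AltChain a b f) (n := n + 1) (k := m' + 1)
        (by omega) (by omega) h
  obtain ⟨x, ε, hε, hxmono, hxIcc, hxsgn⟩ := hm'P
  set m : ℕ := m' - 1 with hmdef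
  have hm'm : m' = m + 1 := by omega
  have hε2 : ε * ε = 1 := by rcases hε with rfl | rfl <;> norm_num
  -- the switch points
  set S : ℕ → Set ℝ := fun i =>
    {w | w ∈ Set.Icc (x i) (x (i + 1)) ∧ 0 < ε * (-1) ^ i * f w} with hSdef
  set t : ℕ → ℝ := fun i => sSup (S i) with htdef
  have hxi_mem : ∀ i, i < m → x i ∈ S i := by
    intro i hi
    refine ⟨⟨le_refl _, (hxmono i (i + 1) (by omega) (by omega)).le⟩, hxsgn i (by omega)⟩
  have hSsub : ∀ i, i < m → S i ⊆ Set.Icc a b := by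
    intro i hi w hw
    exact ⟨(hxIcc i (by omega)).1.trans hw.1.1, hw.1.2.trans (hxIcc (i + 1) (by omega)).2⟩
  have hSbdd : ∀ i, BddAbove (S i) := by
    intro i
    exact ⟨x (i + 1), fun w hw => hw.1.2⟩
  have hSne : ∀ i, i < m → (S i).Nonempty := fun i hi => ⟨x i, hxi_mem i hi⟩
  have ht_le : ∀ i, i < m → t i ≤ x (i + 1) :=
    fun i hi => csSup_le (hSne i hi) (fun w hw => hw.1.2)
  have ht_geq : ∀ i, i < m → x i ≤ t i :=
    fun i hi => le_csSup (hSbdd i) (hxi_mem i hi)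
  have ht_Icc : ∀ i, i < m → t i ∈ Set.Icc a b := by
    intro i hi
    exact ⟨(hxIcc i (by omega)).1.trans (ht_geq i hi),
      (ht_le i hi).trans (hxIcc (i + 1) (by omega)).2⟩
  -- weak sign at the switch point
  have htsgn : ∀ i, i < m → 0 ≤ ε * (-1) ^ i * f (t i) := by
    intro i hi
    have hcl : t i ∈ closure (S i) := csSup_mem_closure (hSne i hi) (hSbdd i)
    have hcwa : ContinuousWithinAt (fun w => ε * (-1) ^ i * f w) (S i) (t i) :=
      (continuousWithinAt_const.mul
        ((hf.continuousWithinAt (ht_Icc i hi)).mono (hSsub i hi)))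
    haveI : (𝓝[S i] (t i)).NeBot := mem_closure_iff_nhdsWithin_neBot.mp hcl
    apply ge_of_tendsto hcwa
    filter_upwards [self_mem_nhdsWithin] with w hw
    exact hw.2.le
  -- the switch point is strictly below x (i+1)
  have ht_lt : ∀ i, i < m → t i < x (i + 1) := by
    intro i hi
    rcases eq_or_lt_of_le (ht_le i hi) with heq | hlt
    · exfalso
      have h1 := htsgn i hi
      rw [heq] at h1
      have h2 := hxsgn (i + 1) (by omega)
      rw [pow_succ] at h2
      linarith
    · exact hlt
  -- the switch point is strictly above x i
  have ht_gt : ∀ i, i < m → x i < t i := by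
    intro i hi
    have hgx : 0 < ε * (-1) ^ i * f (x i) := hxsgn i (by omega)
    have hIccsub : Set.Icc (x i) (x (i + 1)) ⊆ Set.Icc a b :=
      Set.Icc_subset_Icc (hxIcc i (by omega)).1 (hxIcc (i + 1) (by omega)).2
    have hgc : ContinuousWithinAt (fun w => ε * (-1) ^ i * f w)
        (Set.Icc (x i) (x (i + 1))) (x i) :=
      continuousWithinAt_const.mul
        ((hf.continuousWithinAt (hxIcc i (by omega))).mono hIccsub)
    have hev : {w | 0 < ε * (-1) ^ i * f w} ∈ 𝓝[Set.Icc (x i) (x (i + 1))] (x i) :=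
      hgc (Ioi_mem_nhds hgx)
    rw [mem_nhdsWithin] at hev
    obtain ⟨U, hUopen, hUmem, hUsub⟩ := hev
    obtain ⟨δ, hδ0, hball⟩ := Metric.isOpen_iff.mp hUopen (x i) hUmem
    have hxx : x i < x (i + 1) := hxmono i (i + 1) (by omega) (by omega)
    set w : ℝ := min (x i + δ / 2) ((x i + x (i + 1)) / 2) with hwdef
    have hw_gt : x i < w := by
      apply lt_min <;> [linarith; linarith]
    have hw_le : w ≤ x (i + 1) := by
      apply (min_le_right _ _).trans
      linarith
    have hw_ball : w ∈ Metric.ball (x i) δ := by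
      rw [Metric.mem_ball, Real.dist_eq, abs_of_pos (by linarith)]
      have := min_le_left (x i + δ / 2) ((x i + x (i + 1)) / 2)
      rw [← hwdef] at this
      linarith
    have hwS : w ∈ S i :=
      ⟨⟨hw_gt.le, hw_le⟩, hUsub ⟨hball hw_ball, hw_gt.le, hw_le⟩⟩
    exact lt_of_lt_of_le hw_gt (le_csSup (hSbdd i) hwS)
  -- the switch points are strictly increasing
  have htmono : ∀ i j, i < j → j < m → t i < t j := by
    intro i j hij hj
    have h1 : t i < x (i + 1) := ht_lt i (by omega)
    have h2 : x (i + 1) ≤ x j := by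
      rcases eq_or_lt_of_le (show i + 1 ≤ j from hij) with heq | hlt
      · rw [heq]
      · exact (hxmono (i + 1) j hlt (by omega)).le
    have h3 : x j < t j := ht_gt j hj
    linarith
  set T : Finset ℝ := (Finset.range m).image t with hTdef
  have hTsub : ↑T ⊆ Set.Ioo a b := by
    intro w hw
    obtain ⟨i, hi, rfl⟩ := Finset.mem_image.mp hw
    rw [Finset.mem_range] at hi
    constructor
    · exact lt_of_le_of_lt (hxIcc i (by omega)).1 (ht_gt i hi)
    · exact lt_of_lt_of_le (ht_lt i hi) (hxIcc (i + 1) (by omega)).2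
  have hTcard : T.card ≤ n - 1 := by
    have h1 := Finset.card_image_le (f := t) (s := Finset.range m)
    rw [Finset.card_range] at h1
    rw [← hTdef] at h1
    omega
  have htinj : ∀ s : Finset ℕ, s ⊆ Finset.range m → Set.InjOn t ↑s := by
    intro s hs i hi j hj heq
    by_contra hne
    have hi' := Finset.mem_range.mp (hs hi)
    have hj' := Finset.mem_range.mp (hs hj)
    rcases lt_or_gt_of_ne hne with h | h
    · exact absurd heq (htmono i j h hj').ne
    · exact absurd heq.symm (htmono j i h hi').ne
  have hNz : ∀ z : ℝ, (T.filter (· < z)).card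
      = ((Finset.range m).filter (fun i => t i < z)).card := by
    intro z
    rw [hTdef, Finset.filter_image]
    exact Finset.card_image_of_injOn (htinj _ (Finset.filter_subset _ _))
  refine ⟨T, hTsub, hTcard, ε, hε, ?_⟩
  intro z hz
  by_contra hcon
  push_neg at hcon
  set A : Finset ℕ := (Finset.range m).filter (fun i => t i < z) with hAdef
  set k : ℕ := A.card with hkdef
  have hbadz : ε * (-1) ^ k * f z < 0 := by
    have := hcon
    rw [hNz z] at this
    rw [← hAdef, ← hkdef] at this
    nlinarith [this]
  have hA_range : A = Finset.range k := by
    rw [hkdef]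
    apply downward_closed_eq_range
    intro j hj i hij
    rw [hAdef, Finset.mem_filter, Finset.mem_range] at hj ⊢
    exact ⟨by omega, (htmono i j hij hj.1).trans hj.2⟩
  have hk_le : k ≤ m := by
    have h1 : A.card ≤ (Finset.range m).card := by
      rw [hAdef]; exact Finset.card_filter_le _ _
    rw [Finset.card_range] at h1
    omega
  have hkiff : ∀ i, i < m → (t i < z ↔ i < k) := by
    intro i hi
    constructor
    · intro h
      have : i ∈ A := Finset.mem_filter.mpr ⟨Finset.mem_range.mpr hi, h⟩
      rw [hA_range, Finset.mem_range] at this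
      exact this
    · intro h
      have : i ∈ A := by rw [hA_range, Finset.mem_range]; exact h
      exact (Finset.mem_filter.mp this).2
  rcases lt_trichotomy z (x k) with hzx | hzx | hzx
  · by_cases hk0 : k = 0
    · -- prepend z to the chain
      apply hnotP
      refine ⟨fun i => if i = 0 then z else x (i - 1), -ε, ?_, ?_, ?_, ?_⟩
      · rcases hε with rfl | rfl
        · exact Or.inr (by norm_num)
        · exact Or.inl (by norm_num)
      · intro i j hij hj
        simp only []
        by_cases hi0 : i = 0
        · subst hi0
          rw [if_pos rfl, if_neg (by omega)]
          have h1 : z < x 0 := by rw [← hk0]; exact hzx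
          have h2 : x 0 ≤ x (j - 1) := by
            rcases Nat.eq_or_lt_of_le (show 0 ≤ j - 1 from Nat.zero_le _) with heq | hlt
            · rw [← heq]
            · exact (hxmono 0 (j - 1) hlt (by omega)).le
          linarith
        · rw [if_neg hi0, if_neg (by omega)]
          exact hxmono (i - 1) (j - 1) (by omega) (by omega)
      · intro i hi
        simp only []
        by_cases hi0 : i = 0
        · rw [if_pos hi0]; exact hz
        · rw [if_neg hi0]; exact hxIcc (i - 1) (by omega)
      · intro i hi
        simp only []
        by_cases hi0 : i = 0
        · subst hi0
          rw [if_pos rfl]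
          rw [hk0, pow_zero] at hbadz
          simp only [pow_zero]
          linarith
        · obtain ⟨i', rfl⟩ : ∃ i', i = i' + 1 := ⟨i - 1, by omega⟩
          rw [if_neg hi0]
          have h1 := hxsgn i' (by omega)
          simp only [Nat.add_sub_cancel, pow_succ]
          linarith
    · -- z would belong to S (k-1) above its sup
      exfalso
      have hk'm : k - 1 < m := by omega
      have hkk : k = (k - 1) + 1 := by omega
      have h1 : t (k - 1) < z := (hkiff (k - 1) hk'm).mpr (by omega)
      have h2 : x (k - 1) < t (k - 1) := ht_gt (k - 1) hk'm
      have hsz : 0 < ε * (-1) ^ (k - 1) * f z := by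
        rw [hkk, pow_succ] at hbadz
        nlinarith
      have hzS : z ∈ S (k - 1) := ⟨⟨by linarith, by rw [← hkk]; exact hzx.le⟩, hsz⟩
      have := le_csSup (hSbdd (k - 1)) hzS
      linarith
  · exfalso
    have h1 := hxsgn k (by omega)
    rw [← hzx] at h1
    linarith
  · by_cases hkm : k = m
    · -- append z to the chain
      apply hnotP
      refine ⟨fun i => if i < m' then x i else z, ε, hε, ?_, ?_, ?_⟩
      · intro i j hij hj
        simp only []
        by_cases hjm : j < m'
        · rw [if_pos (by omega), if_pos hjm]
          exact hxmono i j hij hjm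
        · rw [if_pos (by omega), if_neg hjm]
          have h2 : x i ≤ x m := by
            rcases Nat.eq_or_lt_of_le (show i ≤ m by omega) with heq | hlt
            · rw [heq]
            · exact (hxmono i m hlt (by omega)).le
          rw [← hkm] at h2
          linarith
      · intro i hi
        simp only []
        by_cases him : i < m'
        · rw [if_pos him]; exact hxIcc i him
        · rw [if_neg him]; exact hz
      · intro i hi
        simp only []
        by_cases him : i < m'
        · rw [if_pos him]; exact hxsgn i him
        · rw [if_neg him]
          have hieq : i = m + 1 := by omega
          subst hieq
          rw [hkm] at hbadz
          rw [pow_succ]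
          linarith
    · -- insert z and a point of S k into the chain
      exfalso
      have hklt : k < m := by omega
      have hzle : z ≤ t k := by
        by_contra hgt
        push_neg at hgt
        exact absurd ((hkiff k hklt).mp hgt) (by omega)
      rcases eq_or_lt_of_le hzle with heq | hlt
      · have h1 := htsgn k hklt
        rw [← heq] at h1
        linarith
      · obtain ⟨w, hwS, hzw⟩ := exists_lt_of_lt_csSup (hSne k hklt) hlt
        have hwt : w ≤ t k := le_csSup (hSbdd k) hwS
        have hwx : w < x (k + 1) := lt_of_le_of_lt hwt (ht_lt k hklt)
        apply hnotP
        apply altChain_mono (show m' + 1 ≤ m' + 2 by omega)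
        refine ⟨fun i => if i ≤ k then x i else if i = k + 1 then z
          else if i = k + 2 then w else x (i - 2), ε, hε, ?_, ?_, ?_⟩
        · intro i j hij hj
          simp only []
          have hxk : ∀ i', i' ≤ k → x i' ≤ x k := by
            intro i' hi'
            rcases Nat.eq_or_lt_of_le hi' with heq | hlt'
            · rw [heq]
            · exact (hxmono i' k hlt' (by omega)).le
          have hxk1 : ∀ j', k + 1 ≤ j' → j' < m' → x (k + 1) ≤ x j' := by
            intro j' h1 h2
            rcases Nat.eq_or_lt_of_le h1 with heq | hlt'
            · rw [← heq]
            · exact (hxmono (k + 1) j' hlt' h2).le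
          by_cases hik : i ≤ k <;> by_cases hjk : j ≤ k
          · rw [if_pos hik, if_pos hjk]; exact hxmono i j hij (by omega)
          · rw [if_pos hik]
            by_cases hj1 : j = k + 1
            · rw [if_neg hjk, if_pos hj1]
              have := hxk i hik
              linarith
            · by_cases hj2 : j = k + 2
              · rw [if_neg hjk, if_neg hj1, if_pos hj2]
                have := hxk i hik
                linarith
              · rw [if_neg hjk, if_neg hj1, if_neg hj2]
                have h1 : x i ≤ x k := hxk i hik
                have h2 : x (k + 1) ≤ x (j - 2) := hxk1 (j - 2) (by omega) (by omega)
                have h3 : x k < x (k + 1) := hxmono k (k + 1) (by omega) (by omega)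
                linarith
          · omega
          · rw [if_neg hik, if_neg hjk]
            by_cases hi1 : i = k + 1
            · rw [if_pos hi1]
              by_cases hj2 : j = k + 2
              · rw [if_neg (by omega), if_pos hj2]
                exact hzw
              · rw [if_neg (by omega), if_neg hj2]
                have h2 : x (k + 1) ≤ x (j - 2) := hxk1 (j - 2) (by omega) (by omega)
                linarith
            · by_cases hi2 : i = k + 2
              · rw [if_neg hi1, if_pos hi2]
                by_cases hj2 : j = k + 2
                · omega
                · rw [if_neg (by omega), if_neg hj2]
                  have h2 : x (k + 1) ≤ x (j - 2) := hxk1 (j - 2) (by omega) (by omega)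
                  linarith
              · rw [if_neg hi1, if_neg hi2, if_neg (by omega), if_neg (by omega)]
                exact hxmono (i - 2) (j - 2) (by omega) (by omega)
        · intro i hi
          simp only []
          by_cases hik : i ≤ k
          · rw [if_pos hik]; exact hxIcc i (by omega)
          · by_cases hi1 : i = k + 1
            · rw [if_neg hik, if_pos hi1]; exact hz
            · by_cases hi2 : i = k + 2
              · rw [if_neg hik, if_neg hi1, if_pos hi2]
                exact hSsub k hklt hwS
              · rw [if_neg hik, if_neg hi1, if_neg hi2]
                exact hxIcc (i - 2) (by omega)
        · intro i hi
          simp only []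
          by_cases hik : i ≤ k
          · rw [if_pos hik]; exact hxsgn i (by omega)
          · by_cases hi1 : i = k + 1
            · rw [if_neg hik, if_pos hi1]
              subst hi1
              rw [pow_succ]
              linarith
            · by_cases hi2 : i = k + 2
              · rw [if_neg hik, if_neg hi1, if_pos hi2]
                subst hi2
                have h1 := hwS.2
                rw [show k + 2 = k + 1 + 1 from rfl, pow_succ, pow_succ]
                nlinarith
              · obtain ⟨i', rfl⟩ : ∃ i', i = i' + 2 := ⟨i - 2, by omega⟩
                rw [if_neg hik, if_neg hi1, if_neg hi2]
                have h1 := hxsgn i' (by omega)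
                simp only [Nat.add_sub_cancel]
                rw [show i' + 2 = i' + 1 + 1 from rfl, pow_succ, pow_succ]
                nlinarith

/-- If a continuous function `f` on `[a,b]` is orthogonal, with a nonnegative continuous
weight `ρ` (with `f·ρ` not identically zero), to a Chebyshev system `F` of order `n`
on `[a,b]`, then `f` changes sign at least `n` times in `[a,b]`. -/
theorem orthogonal_to_chebyshev_sign_changes
    (n : ℕ) (a b : ℝ) (hab : a < b) (F : Fin n → ℝ → ℝ)
    (hF : ∀ j, ContinuousOn (F j) (Set.Icc a b))
    (hcheb : ∀ c : Fin n → ℝ, c ≠ 0 →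
      {x ∈ Set.Icc a b | ∑ j, c j * F j x = 0}.encard ≤ (n - 1 : ℕ))
    (ρ : ℝ → ℝ) (hρc : ContinuousOn ρ (Set.Icc a b))
    (hρ0 : ∀ x ∈ Set.Icc a b, 0 ≤ ρ x)
    (f : ℝ → ℝ) (hf : ContinuousOn f (Set.Icc a b))
    (hne : ∃ x ∈ Set.Icc a b, f x * ρ x ≠ 0)
    (horth : ∀ j, ∫ x in a..b, f x * F j x * ρ x = 0) :
    ∃ x : Fin (n + 1) → ℝ, StrictMono x ∧ (∀ i, x i ∈ Set.Icc a b) ∧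
      ∀ i : Fin n, f (x i.castSucc) * f (x i.succ) < 0 := by
  classical
  obtain ⟨x₁, hx₁, hfρ1⟩ := hne
  have hfx₁ : f x₁ ≠ 0 := left_ne_zero_of_mul hfρ1
  rcases Nat.eq_zero_or_pos n with hn0 | hn
  · subst hn0
    refine ⟨fun _ => a, ?_, ?_, ?_⟩
    · intro i j hij
      exfalso
      have h1 : (i : ℕ) < (j : ℕ) := hij
      have h2 := i.isLt
      have h3 := j.isLt
      omega
    · intro _; exact ⟨le_refl a, hab.le⟩
    · intro i; exact i.elim0
  · by_contra hcon
    -- no alternating chain of length n+1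
    have hno : ¬ AltChain a b f (n + 1) := by
      rintro ⟨x, ε, hε, hmono, hIcc, hsgn⟩
      apply hcon
      refine ⟨fun i => x i, ?_, ?_, ?_⟩
      · intro i j hij
        exact hmono i j (by exact_mod_cast hij) j.isLt
      · intro i; exact hIcc i i.isLt
      · intro i
        have h1 := hsgn (i : ℕ) (by omega)
        have h2 := hsgn ((i : ℕ) + 1) (by omega)
        have hε2 : ε * ε = 1 := by rcases hε with rfl | rfl <;> norm_num
        have hp2 : (-1 : ℝ) ^ (i : ℕ) * (-1) ^ (i : ℕ) = 1 := by
          rw [← pow_add]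
          exact Even.neg_one_pow ⟨(i : ℕ), by ring⟩
        rw [pow_succ] at h2
        have hc : ((i.castSucc : Fin (n + 1)) : ℕ) = (i : ℕ) := rfl
        have hs : ((i.succ : Fin (n + 1)) : ℕ) = (i : ℕ) + 1 := rfl
        simp only []
        rw [hc, hs]
        set u : ℝ := ε * (-1) ^ (i : ℕ) with hudef
        have hu2 : u * u = 1 := by
          rw [hudef, show ε * (-1) ^ (i:ℕ) * (ε * (-1) ^ (i:ℕ))
            = (ε * ε) * ((-1 : ℝ) ^ (i:ℕ) * (-1) ^ (i:ℕ)) from by ring, hε2, hp2]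
          norm_num
        have h3 : 0 < -(u * f (x ((i : ℕ) + 1))) := by
          have : ε * ((-1) ^ (i:ℕ) * -1) * f (x ((i:ℕ) + 1))
              = -(u * f (x ((i:ℕ) + 1))) := by rw [hudef]; ring
          linarith [this ▸ h2]
        have h6 := mul_pos (show 0 < u * f (x (i : ℕ)) from by
          rw [hudef]; exact h1) h3
        rw [show (u * f (x (i:ℕ))) * -(u * f (x ((i:ℕ) + 1)))
          = -((u * u) * (f (x (i:ℕ)) * f (x ((i:ℕ) + 1)))) from by ring, hu2,
          one_mul] at h6
        linarith
    obtain ⟨T, hTsub, hTcard, σ, hσ, hsgnf⟩ :=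
      sign_structure hab hn f hf x₁ hx₁ hfx₁ hno
    obtain ⟨c, hc0, hgsgn⟩ := krein hab hn F hF hcheb T hTsub hTcard
    set g : ℝ → ℝ := fun x => ∑ j, c j * F j x with hgdef
    have hgc : ContinuousOn g (Set.Icc a b) := by
      apply continuousOn_finset_sum
      intro j _
      exact (hF j).const_smul (c j) |>.congr (fun x _ => by simp [smul_eq_mul])
    set h : ℝ → ℝ := fun z => σ * (f z * g z * ρ z) with hhdef
    have hσ0 : σ ≠ 0 := by rcases hσ with rfl | rfl <;> norm_num
    -- nonnegativity of h on [a,b]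
    have hkey : ∀ z ∈ Set.Icc a b, 0 ≤ h z := by
      intro z hz
      have h1 := hsgnf z hz
      have h2 := hgsgn z hz
      have h3 := hρ0 z hz
      have hp2 : (-1 : ℝ) ^ ((T.filter (· < z)).card)
          * (-1) ^ ((T.filter (· < z)).card) = 1 := by
        rw [← pow_add]
        exact Even.neg_one_pow ⟨(T.filter (· < z)).card, by ring⟩
      have h4 := mul_nonneg (mul_nonneg h1 h2) h3
      rw [show σ * ((-1 : ℝ) ^ ((T.filter (· < z)).card) * f z)
          * ((-1 : ℝ) ^ ((T.filter (· < z)).card) * g z) * ρ z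
        = σ * (f z * g z * ρ z) * ((-1 : ℝ) ^ ((T.filter (· < z)).card)
          * (-1) ^ ((T.filter (· < z)).card)) from by ring, hp2, mul_one] at h4
      exact h4
    -- the integral of h vanishes
    have hicc : Set.uIcc a b = Set.Icc a b := Set.uIcc_of_le hab.le
    have hintg : ∀ j : Fin n, IntervalIntegrable
        (fun x => σ * c j * (f x * F j x * ρ x)) MeasureTheory.volume a b := by
      intro j
      apply ContinuousOn.intervalIntegrable
      rw [hicc]
      exact (continuousOn_const.mul ((hf.mul (hF j)).mul hρc))
    have hint : (∫ x in a..b, h x) = 0 := by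
      have hexp : ∀ x : ℝ, h x = ∑ j, σ * c j * (f x * F j x * ρ x) := by
        intro x
        rw [hhdef]
        simp only [hgdef]
        rw [show σ * (f x * (∑ j, c j * F j x) * ρ x)
          = ∑ j, σ * c j * (f x * F j x * ρ x) from by
            rw [Finset.mul_sum, Finset.sum_mul, Finset.mul_sum]
            exact Finset.sum_congr rfl (fun j _ => by ring)]
      rw [show (∫ x in a..b, h x) = ∫ x in a..b, ∑ j, σ * c j * (f x * F j x * ρ x) from by
        congr 1; funext x; exact hexp x]
      rw [intervalIntegral.integral_finset_sum (fun j _ => hintg j)]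
      apply Finset.sum_eq_zero
      intro j _
      rw [intervalIntegral.integral_const_mul, horth j, mul_zero]
    -- locate an interval where h is positive
    have hcont : ContinuousOn (fun z => f z * ρ z) (Set.Icc a b) := hf.mul hρc
    have h5 : {z | f z * ρ z ≠ 0} ∈ 𝓝[Set.Icc a b] x₁ :=
      (hcont.continuousWithinAt hx₁) (isOpen_ne.mem_nhds hfρ1)
    rw [mem_nhdsWithin] at h5
    obtain ⟨U, hUopen, hUx₁, hUsub⟩ := h5
    obtain ⟨δ, hδ0, hball⟩ := Metric.isOpen_iff.mp hUopen x₁ hUx₁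
    set c' : ℝ := max a (x₁ - δ / 2) with hc'def
    set d' : ℝ := min b (x₁ + δ / 2) with hd'def
    have hc'd' : c' < d' := by
      apply max_lt
      · apply lt_min hab
        have := hx₁.1
        linarith
      · apply lt_min
        · have := hx₁.2; linarith
        · linarith
    have hIoosub : Set.Ioo c' d' ⊆ Set.Icc a b := by
      intro z hz
      exact ⟨(le_max_left a _).trans hz.1.le, hz.2.le.trans (min_le_left b _)⟩
    have hfρne : ∀ z ∈ Set.Ioo c' d', f z * ρ z ≠ 0 := by
      intro z hz
      apply hUsub
      refine ⟨hball ?_, hIoosub hz⟩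
      rw [Metric.mem_ball, Real.dist_eq, abs_lt]
      have h1 : x₁ - δ / 2 ≤ c' := le_max_right _ _
      have h2 : d' ≤ x₁ + δ / 2 := min_le_right _ _
      constructor <;> [linarith [hz.1]; linarith [hz.2]]
    have hgfin : {x ∈ Set.Icc a b | g x = 0}.Finite := by
      rw [← Set.encard_ne_top_iff]
      intro htop
      have := hcheb c hc0
      rw [hgdef] at htop
      rw [show {x ∈ Set.Icc a b | ∑ j, c j * F j x = 0}
        = {x ∈ Set.Icc a b | (fun x => ∑ j, c j * F j x) x = 0} from rfl, htop] at this
      exact absurd this (by simp)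
    obtain ⟨x₂, hx₂d⟩ := ((Set.Ioo_infinite hc'd').diff hgfin).nonempty
    have hx₂Ioo : x₂ ∈ Set.Ioo c' d' := hx₂d.1
    have hx₂Icc : x₂ ∈ Set.Icc a b := hIoosub hx₂Ioo
    have hx₂g : g x₂ ≠ 0 := by
      intro hg0
      exact hx₂d.2 ⟨hx₂Icc, hg0⟩
    have hx₂ab : x₂ ∈ Set.Ioo a b :=
      ⟨lt_of_le_of_lt (le_max_left a _) hx₂Ioo.1, lt_of_lt_of_le hx₂Ioo.2 (min_le_left b _)⟩
    have hpos : 0 < h x₂ := by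
      rcases eq_or_lt_of_le (hkey x₂ hx₂Icc) with heq | hlt
      · exfalso
        have hne2 : h x₂ ≠ 0 := by
          rw [hhdef]
          simp only
          rw [show σ * (f x₂ * g x₂ * ρ x₂) = σ * g x₂ * (f x₂ * ρ x₂) from by ring]
          exact mul_ne_zero (mul_ne_zero hσ0 hx₂g) (hfρne x₂ hx₂Ioo)
        exact hne2 heq.symm
      · exact hlt
    have hhc : ContinuousOn h (Set.Icc a b) :=
      continuousOn_const.mul ((hf.mul hgc).mul hρc)
    have hcAt : ContinuousAt h x₂ :=
      hhc.continuousAt (Icc_mem_nhds hx₂ab.1 hx₂ab.2)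
    have hev2 : {z | 0 < h z} ∈ 𝓝 x₂ := hcAt (Ioi_mem_nhds hpos)
    obtain ⟨η, hη0, hηsub⟩ := Metric.mem_nhds_iff.mp hev2
    set η' : ℝ := min η (min (x₂ - a) (b - x₂)) with hη'def
    have hη'0 : 0 < η' := by
      apply lt_min hη0
      apply lt_min
      · linarith [hx₂ab.1]
      · linarith [hx₂ab.2]
    set l : ℝ := x₂ - η' / 2 with hldef
    set r : ℝ := x₂ + η' / 2 with hrdef
    have hlr : l < r := by rw [hldef, hrdef]; linarith
    have hal : a ≤ l := by
      have : η' ≤ x₂ - a := (min_le_right _ _).trans (min_le_left _ _)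
      rw [hldef]; linarith
    have hrb : r ≤ b := by
      have : η' ≤ b - x₂ := (min_le_right _ _).trans (min_le_right _ _)
      rw [hrdef]; linarith
    have hsubball : Set.Ioo l r ⊆ Metric.ball x₂ η := by
      intro z hz
      rw [Metric.mem_ball, Real.dist_eq, abs_lt]
      have hηη : η' ≤ η := min_le_left _ _
      constructor
      · have := hz.1; rw [hldef] at this; linarith
      · have := hz.2; rw [hrdef] at this; linarith
    have hintlr : IntervalIntegrable h MeasureTheory.volume l r := by
      apply ContinuousOn.intervalIntegrable
      rw [Set.uIcc_of_le hlr.le]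
      exact hhc.mono (Set.Icc_subset_Icc hal hrb)
    have hposint : 0 < ∫ x in l..r, h x := by
      apply intervalIntegral_pos_of_pos_on hintlr
      · intro z hz
        exact hηsub (hsubball hz)
      · exact hlr
    have hintab : IntervalIntegrable h MeasureTheory.volume a b := by
      apply ContinuousOn.intervalIntegrable
      rw [hicc]
      exact hhc
    have hmono_int : (∫ x in l..r, h x) ≤ ∫ x in a..b, h x := by
      apply intervalIntegral.integral_mono_interval hal hlr.le hrb
      · filter_upwards [MeasureTheory.ae_restrict_mem measurableSet_Ioc] with z hz
        exact hkey z ⟨hz.1.le, hz.2⟩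
      · exact hintab
    rw [hint] at hmono_int
    linarith
end
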